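/- arXiv:1508.01498 — 5 statements merged into one kernel-verified Lean document; each statement's English description precedes it below -/
import Mathlib

section
/- For every nonempty finite set F ⊂ ℂ and every ε > 0, one has | (1/|F|)·Σ_{x∈F} ( ∫₀¹ log⁺| x + ε·e^{2πit} | dt − log⁺|x| ) | ≤ ε. -/
/-- log⁺ -/
noncomputable def logPlus (t : ℝ) : ℝ := max (Real.log t) 0

lemma logPlus_eq_log_max (a : ℝ) (ha : 0 ≤ a) : logPlus a = Real.log (max a 1) := by
  rcases le_total a 1 with h | h
  · have : Real.log a ≤ 0 := Real.log_nonpos ha h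
    simp [logPlus, max_eq_right h, max_eq_right this]
  · have : 0 ≤ Real.log a := Real.log_nonneg h
    simp [logPlus, max_eq_left h, max_eq_left this]

lemma log_lip {x y : ℝ} (hx : 1 ≤ x) (hy : 1 ≤ y) (h : y ≤ x) :
    Real.log x - Real.log y ≤ x - y := by
  rw [← Real.log_div (by linarith) (by linarith)]
  have h1 : Real.log (x / y) ≤ x / y - 1 :=
    Real.log_le_sub_one_of_pos (by positivity)
  have h2 : x / y - 1 ≤ x - y := by
    rw [div_sub_one (by linarith), div_le_iff₀ (by linarith)]
    nlinarith
  linarith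

lemma logPlus_lip {a b : ℝ} (ha : 0 ≤ a) (hb : 0 ≤ b) :
    |logPlus a - logPlus b| ≤ |a - b| := by
  rw [logPlus_eq_log_max a ha, logPlus_eq_log_max b hb]
  have hma : 1 ≤ max a 1 := le_max_right _ _
  have hmb : 1 ≤ max b 1 := le_max_right _ _
  have key : |Real.log (max a 1) - Real.log (max b 1)| ≤ |max a 1 - max b 1| := by
    rcases le_total (max b 1) (max a 1) with h | h
    · rw [abs_of_nonneg (sub_nonneg.2 (Real.log_le_log (by linarith) h)),
        abs_of_nonneg (sub_nonneg.2 h)]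
      exact log_lip hma hmb h
    · rw [abs_sub_comm, abs_sub_comm (max a 1),
        abs_of_nonneg (sub_nonneg.2 (Real.log_le_log (by linarith) h)),
        abs_of_nonneg (sub_nonneg.2 h)]
      exact log_lip hmb hma h
  exact key.trans (abs_max_sub_max_le_abs a b 1)

theorem statement5 (F : Finset ℂ) (hF : F.Nonempty) (ε : ℝ) (hε : 0 < ε) :
    |(F.card : ℝ)⁻¹ * ∑ x ∈ F,
        ((∫ t in (0:ℝ)..1,
            logPlus (‖x + (ε : ℂ) * Complex.exp (2 * Real.pi * Complex.I * (t : ℂ))‖))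
          - logPlus (‖x‖))| ≤ ε := by
  have habs_e : ∀ t : ℝ,
      ‖(ε : ℂ) * Complex.exp (2 * Real.pi * Complex.I * (t : ℂ))‖ = ε := by
    intro t
    rw [norm_mul, Complex.norm_exp]
    have : (2 * (Real.pi : ℂ) * Complex.I * (t : ℂ)).re = 0 := by
      simp [Complex.mul_re, Complex.mul_im]
    rw [this]
    simp [abs_of_pos hε]
  have key : ∀ x : ℂ,
      |(∫ t in (0:ℝ)..1,
          logPlus (‖x + (ε : ℂ) * Complex.exp (2 * Real.pi * Complex.I * (t : ℂ))‖))
        - logPlus (‖x‖)| ≤ ε := by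
    intro x
    set f : ℝ → ℝ := fun t =>
      logPlus (‖x + (ε : ℂ) * Complex.exp (2 * Real.pi * Complex.I * (t : ℂ))‖) with hf
    have hfeq : f = fun t : ℝ =>
        Real.log (max (‖x + (ε : ℂ) * Complex.exp (2 * Real.pi * Complex.I * (t : ℂ))‖) 1) :=
      funext fun t => logPlus_eq_log_max _ (norm_nonneg _)
    have hcont : Continuous f := by
      rw [hfeq]
      apply Continuous.log
      · apply Continuous.max _ continuous_const
        apply continuous_norm.comp
        exact continuous_const.add (continuous_const.mul
          (Complex.continuous_exp.comp (continuous_const.mul Complex.continuous_ofReal)))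
      · intro t
        exact ne_of_gt (lt_of_lt_of_le one_pos (le_max_right _ _))
    set c := logPlus (‖x‖) with hc
    have hint : (∫ t in (0:ℝ)..1, f t) - c = ∫ t in (0:ℝ)..1, (f t - c) := by
      rw [intervalIntegral.integral_sub (hcont.intervalIntegrable 0 1)
        (intervalIntegrable_const), intervalIntegral.integral_const]
      simp
    rw [hint]
    have hb : ∀ t ∈ Set.uIoc (0:ℝ) 1, ‖f t - c‖ ≤ ε := by
      intro t _
      have h1 : |‖x + (ε : ℂ) * Complex.exp (2 * Real.pi * Complex.I * (t : ℂ))‖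
          - ‖x‖| ≤ ε := by
        have := abs_norm_sub_norm_le
          (x + (ε : ℂ) * Complex.exp (2 * Real.pi * Complex.I * (t : ℂ))) x
        rwa [add_sub_cancel_left, habs_e t] at this
      have h2 := logPlus_lip (norm_nonneg
        (x + (ε : ℂ) * Complex.exp (2 * Real.pi * Complex.I * (t : ℂ)))) (norm_nonneg x)
      calc ‖f t - c‖ = |logPlus (‖x + (ε : ℂ) * Complex.exp
            (2 * Real.pi * Complex.I * (t : ℂ))‖) - logPlus (‖x‖)| := rfl
        _ ≤ _ := h2
        _ ≤ ε := h1
    have := intervalIntegral.norm_integral_le_of_norm_le_const hb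
    simpa using this
  have hcard : (0:ℝ) < (F.card : ℝ) := by exact_mod_cast hF.card_pos
  calc |(F.card : ℝ)⁻¹ * ∑ x ∈ F, ((∫ t in (0:ℝ)..1,
          logPlus (‖x + (ε : ℂ) * Complex.exp (2 * Real.pi * Complex.I * (t : ℂ))‖))
          - logPlus (‖x‖))|
      = (F.card : ℝ)⁻¹ * |∑ x ∈ F, ((∫ t in (0:ℝ)..1,
          logPlus (‖x + (ε : ℂ) * Complex.exp (2 * Real.pi * Complex.I * (t : ℂ))‖))
          - logPlus (‖x‖))| := by
        rw [abs_mul, abs_of_nonneg (by positivity : (0:ℝ) ≤ (F.card : ℝ)⁻¹)]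
    _ ≤ (F.card : ℝ)⁻¹ * ∑ x ∈ F, |((∫ t in (0:ℝ)..1,
          logPlus (‖x + (ε : ℂ) * Complex.exp (2 * Real.pi * Complex.I * (t : ℂ))‖))
          - logPlus (‖x‖))| := by
        gcongr
        exact Finset.abs_sum_le_sum_abs _ _
    _ ≤ (F.card : ℝ)⁻¹ * ∑ _x ∈ F, ε := by
        gcongr with x hx
        exact key x
    _ = ε := by
        rw [Finset.sum_const, nsmul_eq_mul]
        field_simp
end

section
/- For every nonempty finite set F ⊂ ℂ and every ε > 0, one has (1/|F|²)·Σ_{x∈F} Σ_{x'∈F} ∫₀¹∫₀¹ −log| x + ε·e^{2πit} − x' − ε·e^{2πis} | dt ds ≤ (1/|F|²)·Σ_{x,x'∈F, x≠x'} −log|x−x'| − (log ε)/|F|. -/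
open MeasureTheory intervalIntegral Real Set

-- integrability of log on (0,1]
lemma intlog01 : IntervalIntegrable Real.log volume 0 1 := by
  rw [intervalIntegrable_iff_integrableOn_Ioc_of_le (by norm_num)]
  apply MeasureTheory.integrableOn_Ioc_of_intervalIntegral_norm_bounded_left
    (l := Filter.atTop) (a := fun n : ℕ => ((n:ℝ)+1)⁻¹) (I := 1)
  · intro n
    apply (ContinuousOn.integrableOn_Icc ?_).mono_set Ioc_subset_Icc_self
    apply Real.continuousOn_log.mono
    intro x hx
    simp only [mem_compl_iff, mem_singleton_iff]
    have : (0:ℝ) < ((n:ℝ)+1)⁻¹ := by positivity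
    nlinarith [hx.1]
  · exact tendsto_one_div_add_atTop_nhds_zero_nat.congr (by intro n; rw [one_div])
  · filter_upwards with n
    have hn : (0:ℝ) < ((n:ℝ)+1)⁻¹ := by positivity
    have hn1 : ((n:ℝ)+1)⁻¹ ≤ 1 := by
      rw [inv_le_one_iff₀]; right; linarith [Nat.cast_nonneg (α := ℝ) n]
    have hcongr : ∀ x ∈ Ioc (((n:ℝ)+1)⁻¹) 1, ‖Real.log x‖ = -Real.log x := by
      intro x hx
      rw [Real.norm_eq_abs, abs_of_nonpos (Real.log_nonpos (le_of_lt (lt_trans hn hx.1)) hx.2)]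
    set a := ((n:ℝ)+1)⁻¹ with ha
    have key : ∫ x in Ioc a 1, ‖Real.log x‖ = -∫ x in a..1, Real.log x := by
      rw [intervalIntegral.integral_of_le hn1, ← MeasureTheory.integral_neg]
      exact MeasureTheory.setIntegral_congr_fun measurableSet_Ioc (fun x hx => by
        rw [hcongr x hx])
    rw [key, integral_log]
    have hla : Real.log a ≤ 0 := Real.log_nonpos hn.le hn1
    have : a * Real.log a ≤ 0 := mul_nonpos_of_nonneg_of_nonpos hn.le hla
    nlinarith [Real.log_one]

-- paste ee part for testing

open MeasureTheory intervalIntegral Real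


noncomputable def cabs : AbsoluteValue ℂ ℝ where
  toFun z := ‖z‖
  map_mul' := norm_mul
  nonneg' := norm_nonneg
  eq_zero' _ := norm_eq_zero
  add_le' := norm_add_le

lemma norm_eq_cabs (z : ℂ) : ‖z‖ = cabs z := rfl

lemma continuous_cabs : Continuous (fun z : ℂ => cabs z) := continuous_norm

lemma cabs_ofReal (r : ℝ) : cabs (r : ℂ) = |r| := Complex.norm_real r

lemma cabs_exp (z : ℂ) : cabs (Complex.exp z) = Real.exp z.re := Complex.norm_exp z

lemma cabs_im_le (z : ℂ) : |z.im| ≤ cabs z := Complex.abs_im_le_norm z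

lemma re_le_cabs (z : ℂ) : z.re ≤ cabs z := Complex.re_le_norm z

lemma cabs_mul_exp_arg_mul_I (x : ℂ) : (cabs x : ℂ) * Complex.exp (x.arg * Complex.I) = x :=
  Complex.norm_mul_exp_arg_mul_I x

noncomputable def ee (t : ℝ) : ℂ := Complex.exp (2 * Real.pi * Complex.I * (t : ℂ))

lemma ee_abs (t : ℝ) : cabs (ee t) = 1 := by
  rw [ee, cabs_exp]
  norm_num [Complex.mul_re, Complex.mul_im]

lemma ee_ne_zero (t : ℝ) : ee t ≠ 0 := by
  intro h
  have := ee_abs t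
  rw [h] at this; simp at this

lemma ee_add (t s : ℝ) : ee (t + s) = ee t * ee s := by
  rw [ee, ee, ee, ← Complex.exp_add]
  push_cast
  ring_nf

lemma ee_zero : ee 0 = 1 := by simp [ee]

lemma ee_neg (t : ℝ) : ee (-t) = (ee t)⁻¹ := by
  have h := ee_add t (-t)
  simp only [add_neg_cancel, ee_zero] at h
  exact eq_inv_of_mul_eq_one_left (by rw [mul_comm, ← h])

lemma ee_periodic : Function.Periodic ee 1 := by
  intro t
  rw [ee_add]
  have : ee 1 = 1 := by
    rw [ee]; push_cast; rw [mul_one, Complex.exp_two_pi_mul_I]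
  rw [this, mul_one]

lemma ee_half (t : ℝ) : ee (t + 1/2) = - ee t := by
  rw [ee_add]
  have : ee (1/2) = -1 := by
    rw [ee]
    have : 2 * (Real.pi : ℂ) * Complex.I * ((1:ℝ)/2 : ℝ) = Real.pi * Complex.I := by
      push_cast; ring
    rw [this, Complex.exp_pi_mul_I]
  rw [this]; ring

lemma ee_two (t : ℝ) : ee (2*t) = (ee t)^2 := by
  have : (2:ℝ)*t = t + t := by ring
  rw [this, ee_add, sq]

lemma ee_int (t : ℝ) (n : ℤ) : ee (t + n) = ee t := by
  have h := (ee_periodic.int_mul n) t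
  simpa using h

lemma ee_surj {u : ℂ} (hu : cabs u = 1) : ∃ τ : ℝ, ee τ = u := by
  refine ⟨u.arg / (2 * Real.pi), ?_⟩
  rw [ee]
  have hπ : (2 * Real.pi : ℂ) ≠ 0 := by
    simp [Real.pi_ne_zero]
  have : 2 * (Real.pi:ℂ) * Complex.I * ((u.arg / (2 * Real.pi) : ℝ) : ℂ) = u.arg * Complex.I := by
    push_cast
    field_simp
  rw [this]
  have := cabs_mul_exp_arg_mul_I u
  rwa [hu, Complex.ofReal_one, one_mul] at this

lemma ee_fiber_countable (u : ℂ) : Set.Countable {t : ℝ | ee t = u} := by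
  rcases Set.eq_empty_or_nonempty {t : ℝ | ee t = u} with h | ⟨τ, hτ⟩
  · simp [h]
  · have hτ' : ee τ = u := hτ
    have : {t : ℝ | ee t = u} ⊆ Set.range (fun n : ℤ => τ + n) := by
      intro t ht
      have heq : ee t = ee τ := by rw [ht, hτ']
      have h1 : ee (t - τ) = 1 := by
        have h2 : ee (t - τ) * ee τ = ee t := by
          rw [← ee_add]; ring_nf
        rw [heq] at h2
        have := mul_right_cancel₀ (ee_ne_zero τ) (h2.trans (one_mul (ee τ)).symm)
        exact this
      rw [ee, Complex.exp_eq_one_iff] at h1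
      obtain ⟨n, hn⟩ := h1
      refine ⟨n, ?_⟩
      have hπ : (2 * (Real.pi:ℂ) * Complex.I) ≠ 0 := by
        simp [Real.pi_ne_zero, Complex.I_ne_zero]
      have : ((t - τ : ℝ) : ℂ) = (n : ℂ) := by
        apply mul_left_cancel₀ hπ
        rw [hn]; ring
      have : (t - τ : ℝ) = (n : ℝ) := by exact_mod_cast this
      simp [← this]
    exact Set.Countable.mono this (Set.countable_range _)

lemma ee_continuous : Continuous ee := by
  unfold ee
  exact Complex.continuous_exp.comp (by continuity)

lemma one_sub_ee_re (t : ℝ) : (1 - ee t).re = 1 - Real.cos (2*Real.pi*t) := by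
  have : ee t = Complex.exp ((2*Real.pi*t : ℝ) * Complex.I) := by
    rw [ee]; push_cast; ring_nf
  rw [this, Complex.sub_re, Complex.one_re, Complex.exp_ofReal_mul_I_re]

lemma one_sub_ee_im (t : ℝ) : (1 - ee t).im = -Real.sin (2*Real.pi*t) := by
  have : ee t = Complex.exp ((2*Real.pi*t : ℝ) * Complex.I) := by
    rw [ee]; push_cast; ring_nf
  rw [this, Complex.sub_im, Complex.one_im, Complex.exp_ofReal_mul_I_im]
  ring

lemma one_sub_ee_lower {t : ℝ} (h0 : 0 ≤ t) (h1 : t ≤ 1) :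
    t * (1 - t) ≤ cabs (1 - ee t) := by
  rcases le_or_gt t (1/4) with hc | hc
  · -- use imaginary part : sin(2πt) ≥ 4t... at least ≥ t would do? t*(1-t) ≤ t ≤ ...
    have hs : 2/Real.pi * (2*Real.pi*t) ≤ Real.sin (2*Real.pi*t) := by
      apply Real.mul_le_sin (by positivity)
      nlinarith [Real.pi_pos]
    have h4 : 2/Real.pi * (2*Real.pi*t) = 4*t := by
      field_simp; ring
    have := cabs_im_le (1 - ee t)
    rw [one_sub_ee_im] at this
    have habs : |(-Real.sin (2*Real.pi*t))| = Real.sin (2*Real.pi*t) := by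
      rw [abs_neg, abs_of_nonneg]; linarith [hs, h4 ▸ hs]
    nlinarith [this, habs ▸ this]
  rcases le_or_gt t (3/4) with hc2 | hc2
  · -- real part ≥ 1
    have hcos : Real.cos (2*Real.pi*t) ≤ 0 := by
      apply Real.cos_nonpos_of_pi_div_two_le_of_le
      · nlinarith [Real.pi_pos]
      · nlinarith [Real.pi_pos]
    have := re_le_cabs (1 - ee t)
    rw [one_sub_ee_re] at this
    nlinarith
  · -- near 1 : use imaginary part with 1 - t
    have hs : 2/Real.pi * (2*Real.pi*(1-t)) ≤ Real.sin (2*Real.pi*(1-t)) := by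
      apply Real.mul_le_sin (by nlinarith [Real.pi_pos])
      nlinarith [Real.pi_pos]
    have hsin : Real.sin (2*Real.pi*t) = - Real.sin (2*Real.pi*(1-t)) := by
      have : 2*Real.pi*t = -(2*Real.pi*(1-t)) + 2*Real.pi := by ring
      rw [this, Real.sin_add_two_pi, Real.sin_neg]
    have h4 : 2/Real.pi * (2*Real.pi*(1-t)) = 4*(1-t) := by field_simp; ring
    have habs := cabs_im_le (1 - ee t)
    rw [one_sub_ee_im, hsin] at habs
    have : |(-(-Real.sin (2*Real.pi*(1-t))))| = Real.sin (2*Real.pi*(1-t)) := by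
      rw [neg_neg, abs_of_nonneg]; linarith [h4 ▸ hs]
    nlinarith [habs, this ▸ habs]

lemma one_sub_ee_upper (t : ℝ) : cabs (1 - ee t) ≤ 2 := by
  calc cabs (1 - ee t) ≤ cabs 1 + cabs (ee t) := by
        simpa [sub_eq_add_neg] using cabs.add_le 1 (-(ee t))
    _ = 2 := by rw [ee_abs]; simp; norm_num

lemma int_log_one_sub_ee : IntervalIntegrable (fun t => Real.log (cabs (1 - ee t)))
    volume 0 1 := by
  have hmeas : AEStronglyMeasurable (fun t => Real.log (cabs (1 - ee t)))
      (volume.restrict (Set.uIoc (0:ℝ) 1)) := by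
    apply Measurable.aestronglyMeasurable
    exact Real.measurable_log.comp (continuous_cabs.comp (continuous_const.sub ee_continuous)).measurable
  have hg : IntervalIntegrable (fun t => 2 - Real.log t - Real.log (1 - t)) volume 0 1 := by
    apply IntervalIntegrable.sub
    apply IntervalIntegrable.sub
    · exact intervalIntegrable_const
    · exact intlog01
    · have := (intlog01.comp_sub_left 1).symm
      simpa using this
  apply hg.mono_fun hmeas
  rw [Filter.EventuallyLE, ae_restrict_iff' measurableSet_uIoc]
  have : (Set.uIoc (0:ℝ) 1) = Set.Ioc 0 1 := Set.uIoc_of_le (by norm_num)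
  rw [this]
  filter_upwards [(Set.countable_singleton (1:ℝ)).ae_notMem volume] with t ht1 ht
  simp only [Set.mem_singleton_iff] at ht1
  have ht0 : 0 < t := ht.1
  have ht1' : t < 1 := lt_of_le_of_ne ht.2 ht1
  have hlow := one_sub_ee_lower ht0.le ht.2
  have hup := one_sub_ee_upper t
  have hpos : 0 < t * (1 - t) := by nlinarith
  have habs : 0 < cabs (1 - ee t) := lt_of_lt_of_le hpos hlow
  have h1 : Real.log (cabs (1 - ee t)) ≤ 2 := by
    calc Real.log (cabs (1 - ee t)) ≤ Real.log 2 := Real.log_le_log habs hup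
      _ ≤ 2 := by nlinarith [Real.log_le_sub_one_of_pos (by norm_num : (0:ℝ) < 2)]
  have h2 : Real.log (t * (1-t)) ≤ Real.log (cabs (1 - ee t)) :=
    Real.log_le_log hpos hlow
  rw [Real.log_mul ht0.ne' (by linarith)] at h2
  have hlt : Real.log t ≤ 0 := Real.log_nonpos ht0.le ht1'.le
  have hlt2 : Real.log (1-t) ≤ 0 := Real.log_nonpos (by linarith) (by linarith)
  rw [Real.norm_eq_abs, Real.norm_eq_abs]
  rw [abs_of_nonneg (by linarith : (0:ℝ) ≤ 2 - Real.log t - Real.log (1 - t))]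
  rw [abs_le]
  constructor <;> linarith

-- periodic extension of interval integrability
lemma periodic_intble {f : ℝ → ℝ} (hp : Function.Periodic f 1)
    (h : IntervalIntegrable f volume 0 1) (a b : ℝ) : IntervalIntegrable f volume a b := by
  have unit : ∀ k : ℤ, IntervalIntegrable f volume k (k+1) := by
    intro k
    have := h.comp_sub_right (k : ℝ)
    have heq : (fun t => f (t - k)) = f := by
      funext t
      have := hp.sub_int_mul_eq (x := t) k
      simpa using this
    rw [heq] at this
    simpa [add_comm] using this
  have chain : ∀ m : ℤ, ∀ n : ℕ, IntervalIntegrable f volume m (m + n) := by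
    intro m n
    induction n with
    | zero => simp
    | succ n ih =>
      have h2 : IntervalIntegrable f volume ((m:ℝ) + n) ((m:ℝ) + n + 1) := by
        have := unit (m + n)
        have hcast : ((m + n : ℤ) : ℝ) = (m:ℝ) + n := by push_cast; ring
        rw [hcast] at this
        exact this
      have h3 := ih.trans h2
      have hcast2 : (m:ℝ) + ((n+1 : ℕ) : ℝ) = (m:ℝ) + n + 1 := by push_cast; ring
      rw [hcast2]
      exact h3
  -- now general a b via mono_set
  have main : ∀ a b : ℝ, a ≤ b → IntervalIntegrable f volume a b := by
    intro a b hab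
    have hm : ((⌊a⌋ : ℝ)) ≤ a := Int.floor_le a
    obtain ⟨n, hn⟩ : ∃ n : ℕ, b ≤ ⌊a⌋ + n := by
      obtain ⟨n, hn⟩ := exists_nat_ge (b - ⌊a⌋)
      exact ⟨n, by linarith⟩
    apply (chain ⌊a⌋ n).mono_set
    rw [Set.uIcc_of_le hab, Set.uIcc_of_le (by linarith)]
    exact Set.Icc_subset_Icc hm hn
  rcases le_total a b with hab | hab
  · exact main a b hab
  · exact (main b a hab).symm

-- the main integrability lemma
lemma key_int (c b : ℂ) (a₁ a₂ : ℝ) :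
    IntervalIntegrable (fun t => Real.log (cabs (c + b * ee t))) volume a₁ a₂ := by
  have hper : Function.Periodic (fun t => Real.log (cabs (c + b * ee t))) 1 := by
    intro t; simp [ee_periodic t]
  apply periodic_intble hper _ a₁ a₂
  rcases eq_or_ne b 0 with rfl | hb
  · simp
  rcases eq_or_ne (cabs (c/b)) 1 with h1 | h1
  · -- singular case
    obtain ⟨τ, hτ⟩ := ee_surj (u := -(c/b)) (by rwa [map_neg_eq_map])
    have key : ∀ t, cabs (c + b * ee t) = cabs b * cabs (1 - ee (t - τ)) := by
      intro t
      have : c + b * ee t = (-b * ee τ) * (1 - ee (t - τ)) := by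
        have h2 : ee τ * ee (t - τ) = ee t := by rw [← ee_add]; ring_nf
        have h3 : (b : ℂ) * (-(c/b)) = -c := by field_simp
        calc c + b * ee t = -(b * (-(c/b))) + b * (ee τ * ee (t-τ)) := by rw [h3, h2]; ring
          _ = -(b * ee τ) + b * ee τ * ee (t - τ) := by rw [← hτ]; ring
          _ = (-b * ee τ) * (1 - ee (t - τ)) := by ring
      rw [this, map_mul]
      congr 1
      rw [map_mul, map_neg_eq_map, ee_abs, mul_one]
    have hbnd : ∀ t, ‖Real.log (cabs (c + b * ee t))‖ ≤
        ‖|Real.log (cabs b)| + |Real.log (cabs (1 - ee (t - τ)))|‖ := by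
      intro t
      rw [key t, Real.norm_eq_abs, Real.norm_eq_abs]
      rcases eq_or_ne (cabs (1 - ee (t - τ))) 0 with h0 | h0
      · rw [h0, mul_zero, Real.log_zero, abs_zero]
        positivity
      · rw [Real.log_mul (by simp [hb]) h0,
          abs_of_nonneg (by positivity : (0:ℝ) ≤ |Real.log (cabs b)| + |Real.log (cabs (1 - ee (t - τ)))|)]
        exact abs_add_le _ _
    have hdom : IntervalIntegrable
        (fun t => |Real.log (cabs b)| + |Real.log (cabs (1 - ee (t - τ)))|)
        volume 0 1 := by
      apply IntervalIntegrable.add intervalIntegrable_const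
      have hper2 : Function.Periodic (fun t => Real.log (cabs (1 - ee t))) 1 := by
        intro t; simp [ee_periodic t]
      have := (periodic_intble hper2 int_log_one_sub_ee (0 - τ) (1 - τ)).comp_sub_right τ
      simpa using this.abs
    apply hdom.mono_fun _ (Filter.Eventually.of_forall hbnd)
    apply Measurable.aestronglyMeasurable
    exact Real.measurable_log.comp
      (continuous_cabs.comp (continuous_const.add (continuous_const.mul ee_continuous))).measurable
  · -- continuous case : c + b * ee t never vanishes
    have hne : ∀ t : ℝ, cabs (c + b * ee t) ≠ 0 := by
      intro t h
      rw [map_eq_zero] at h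
      apply h1
      have hc : c = -(b * ee t) := by linear_combination h
      rw [hc]
      have : -(b * ee t)/b = -(ee t) := by field_simp
      rw [this, map_neg_eq_map, ee_abs]
    exact ((continuous_cabs.comp
      (continuous_const.add (continuous_const.mul ee_continuous))).log hne).intervalIntegrable _ _

noncomputable def Psi (w : ℂ) : ℝ := ∫ t in (0:ℝ)..1, Real.log (cabs (1 - w * ee t))

lemma psi_int (w : ℂ) (a b : ℝ) :
    IntervalIntegrable (fun t => Real.log (cabs (1 - w * ee t))) volume a b := by
  have := key_int 1 (-w) a b
  simpa [neg_mul, ← sub_eq_add_neg] using this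

lemma psi_periodic (w : ℂ) : Function.Periodic (fun t => Real.log (cabs (1 - w * ee t))) 1 := by
  intro t; simp [ee_periodic t]

lemma psi_dup (w : ℂ) : Psi w = Psi (w^2) / 2 := by
  rcases eq_or_ne w 0 with rfl | hw
  · simp [Psi]
  set f : ℝ → ℝ := fun t => Real.log (cabs (1 - w * ee t)) with hf
  set g : ℝ → ℝ := fun t => Real.log (cabs (1 + w * ee t)) with hg
  set h : ℝ → ℝ := fun t => Real.log (cabs (1 - w^2 * ee t)) with hh
  have hsplit : Psi w = (∫ t in (0:ℝ)..(1/2), f t) + ∫ t in (1/2:ℝ)..1, f t := by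
    rw [Psi, ← intervalIntegral.integral_add_adjacent_intervals (psi_int w 0 (1/2)) (psi_int w (1/2) 1)]
  have hshift : (∫ t in (1/2:ℝ)..1, f t) = ∫ t in (0:ℝ)..(1/2), g t := by
    calc (∫ t in (1/2:ℝ)..1, f t) = ∫ t in (0:ℝ)+(1/2)..(1/2:ℝ)+(1/2), f t := by norm_num
      _ = ∫ t in (0:ℝ)..(1/2), f (t + 1/2) :=
          (intervalIntegral.integral_comp_add_right (a := (0:ℝ)) (b := 1/2) f (1/2)).symm
      _ = ∫ t in (0:ℝ)..(1/2), g t := by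
          apply intervalIntegral.integral_congr
          intro t _
          simp only [hf, hg, ee_half]
          ring_nf
  have hg_int : IntervalIntegrable g volume 0 (1/2) := by
    have := key_int 1 w 0 (1/2); simpa [hg] using this
  have hf_int : IntervalIntegrable f volume 0 (1/2) := psi_int w 0 (1/2)
  have hsum : (∫ t in (0:ℝ)..(1/2), f t) + (∫ t in (0:ℝ)..(1/2), g t)
      = ∫ t in (0:ℝ)..(1/2), (f t + g t) := (intervalIntegral.integral_add hf_int hg_int).symm
  have hae : ∀ᵐ t : ℝ, t ∈ Set.uIoc (0:ℝ) (1/2) → f t + g t = h (2 * t) := by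
    have hc : Set.Countable ({t : ℝ | ee t = w⁻¹} ∪ {t : ℝ | ee t = -w⁻¹}) :=
      (ee_fiber_countable _).union (ee_fiber_countable _)
    filter_upwards [hc.ae_notMem volume] with t ht _
    simp only [Set.mem_union, Set.mem_setOf_eq, not_or] at ht
    have h1 : (1 : ℂ) - w * ee t ≠ 0 := by
      intro hz
      exact ht.1 (eq_inv_of_mul_eq_one_left (by linear_combination -hz))
    have h2 : (1 : ℂ) + w * ee t ≠ 0 := by
      intro hz
      refine ht.2 ?_
      have h3 : ee t * (-w) = 1 := by linear_combination -hz
      rw [eq_inv_of_mul_eq_one_left h3, inv_neg]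
    simp only [hf, hg, hh]
    rw [← Real.log_mul (cabs.ne_zero h1) (cabs.ne_zero h2), ← map_mul]
    congr 2
    rw [ee_two]
    ring
  have hcongr : (∫ t in (0:ℝ)..(1/2), (f t + g t)) = ∫ t in (0:ℝ)..(1/2), h (2 * t) :=
    intervalIntegral.integral_congr_ae (by filter_upwards [hae] with t ht h2 using ht h2)
  have hcomp : (∫ t in (0:ℝ)..(1/2), h (2 * t)) = Psi (w^2) / 2 := by
    rw [intervalIntegral.integral_comp_mul_left h (by norm_num : (2:ℝ) ≠ 0)]
    norm_num [Psi, hh]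
    ring
  rw [hsplit, hshift, hsum, hcongr, hcomp]

lemma psi_small {w : ℂ} (h : cabs w ≤ 1/2) : |Psi w| ≤ Real.log 2 := by
  have := intervalIntegral.norm_integral_le_of_norm_le_const
    (C := Real.log 2) (f := fun t => Real.log (cabs (1 - w * ee t)))
    (a := 0) (b := 1) ?_
  · rw [Real.norm_eq_abs] at this
    simpa [Psi] using this
  intro t _
  have habs : cabs (w * ee t) ≤ 1/2 := by
    rw [map_mul, ee_abs, mul_one]; exact h
  have hlow : (1:ℝ)/2 ≤ cabs (1 - w * ee t) := by
    have h1 := norm_sub_norm_le (1:ℂ) (w * ee t)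
    simp only [norm_eq_cabs, map_one] at h1
    linarith
  have hup : cabs (1 - w * ee t) ≤ 2 := by
    have h1 := norm_sub_le (1:ℂ) (w * ee t)
    simp only [norm_eq_cabs, map_one] at h1
    linarith
  rw [Real.norm_eq_abs, abs_le]
  constructor
  · rw [neg_le, ← Real.log_inv]
    apply Real.log_le_log (by positivity)
    rw [inv_le_comm₀ (by linarith) (by norm_num)]
    linarith
  · exact Real.log_le_log (by linarith) hup

lemma psi_pow (w : ℂ) (n : ℕ) : Psi w = Psi (w ^ (2^n)) / 2^n := by
  induction n with
  | zero => simp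
  | succ n ih =>
    rw [ih, psi_dup (w ^ (2^n))]
    rw [← pow_mul]
    have : 2^n * 2 = 2^(n+1) := by ring
    rw [this]
    push_cast
    ring

lemma psi_zero_of_lt {w : ℂ} (h : cabs w < 1) : Psi w = 0 := by
  have key : ∀ᶠ n : ℕ in Filter.atTop, |Psi w| ≤ Real.log 2 / 2^n := by
    have h2 : Filter.Tendsto (fun n : ℕ => (cabs w)^n) Filter.atTop (nhds 0) :=
      tendsto_pow_atTop_nhds_zero_of_lt_one (norm_nonneg w) h
    have h3 : ∀ᶠ n : ℕ in Filter.atTop, (cabs w)^n ≤ 1/2 :=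
      h2.eventually_le_const (by norm_num : (0:ℝ) < 1/2)
    filter_upwards [h3] with n hn
    have hsmall : cabs (w ^ (2^n)) ≤ 1/2 := by
      rw [map_pow]
      calc (cabs w)^(2^n) ≤ (cabs w)^n :=
            pow_le_pow_of_le_one (norm_nonneg w) h.le (Nat.le_of_lt (Nat.lt_two_pow_self (n := n)))
        _ ≤ 1/2 := hn
    have hs := psi_small hsmall
    rw [psi_pow w n, abs_div, abs_of_pos (by positivity : (0:ℝ) < (2:ℝ)^n)]
    exact (div_le_div_iff_of_pos_right (by positivity)).mpr hs
  have htend : Filter.Tendsto (fun n : ℕ => Real.log 2 / 2^n) Filter.atTop (nhds 0) := by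
    have heq : (fun n : ℕ => Real.log 2 / 2^n) = fun n : ℕ => Real.log 2 * ((2:ℝ)⁻¹)^n := by
      funext n; rw [div_eq_mul_inv, inv_pow]
    rw [heq]
    have := (tendsto_pow_atTop_nhds_zero_of_lt_one (by norm_num : (0:ℝ) ≤ 2⁻¹)
      (by norm_num : (2:ℝ)⁻¹ < 1)).const_mul (Real.log 2)
    simpa using this
  have : |Psi w| ≤ 0 := ge_of_tendsto htend key
  exact abs_nonpos_iff.mp this

lemma psi_rot {w : ℂ} (hw : w ≠ 0) : Psi w = Psi ((cabs w : ℝ) : ℂ) := by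
  have habs : cabs (w / (cabs w : ℂ)) = 1 := by
    rw [map_div₀, cabs_ofReal, abs_of_nonneg (cabs.nonneg w),
      div_self (cabs.ne_zero hw)]
  obtain ⟨τ, hτ⟩ := ee_surj habs
  set g : ℝ → ℝ := fun y => Real.log (cabs (1 - ((cabs w : ℝ) : ℂ) * ee y)) with hg
  have hkey : ∀ t, Real.log (cabs (1 - w * ee t)) = g (t + τ) := by
    intro t
    simp only [hg]
    congr 3
    rw [ee_add, hτ]
    have hne : ((cabs w : ℝ) : ℂ) ≠ 0 := by
      simpa [Complex.ofReal_eq_zero] using cabs.ne_zero hw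
    field_simp
  have hper : Function.Periodic g 1 := by
    intro y; simp only [hg, ee_periodic y]
  calc Psi w = ∫ t in (0:ℝ)..1, g (t + τ) := by
        rw [Psi]; exact intervalIntegral.integral_congr fun t _ => hkey t
    _ = ∫ t in (0+τ:ℝ)..(1+τ), g t := intervalIntegral.integral_comp_add_right g τ
    _ = ∫ t in (τ:ℝ)..(τ+1), g t := by norm_num [add_comm]
    _ = ∫ t in (0:ℝ)..(0+1), g t := hper.intervalIntegral_add_eq τ 0
    _ = Psi ((cabs w : ℝ) : ℂ) := by norm_num [Psi, hg]

lemma psi_one : Psi 1 = 0 := by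
  have := psi_dup 1
  rw [one_pow] at this
  linarith

lemma psi_circle {w : ℂ} (h : cabs w = 1) : Psi w = 0 := by
  have hw : w ≠ 0 := by
    intro h0; rw [h0] at h; simp at h
  rw [psi_rot hw, h]
  simpa using psi_one

lemma psi_big {w : ℂ} (h : 1 < cabs w) : Psi w = Real.log (cabs w) := by
  have hw : w ≠ 0 := by
    intro h0; rw [h0] at h; simp at h; linarith
  set g : ℝ → ℝ := fun y => Real.log (cabs (1 - w⁻¹ * ee y)) with hg
  have hne : ∀ y : ℝ, (1 : ℂ) - w⁻¹ * ee y ≠ 0 := by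
    intro y hz
    have : cabs (w⁻¹ * ee y) = 1 := by
      have : (1 : ℂ) = w⁻¹ * ee y := by linear_combination hz
      rw [← this]; simp
    rw [map_mul, ee_abs, mul_one, map_inv₀] at this
    have := this ▸ inv_lt_one_of_one_lt₀ h
    linarith
  have hkey : ∀ t, Real.log (cabs (1 - w * ee t)) =
      Real.log (cabs w) + g (-t) := by
    intro t
    have hfac : (1 : ℂ) - w * ee t = (-(w * ee t)) * (1 - w⁻¹ * ee (-t)) := by
      have h1 : ee t * ee (-t) = 1 := by rw [← ee_add]; simp [ee_zero]
      have h2 : w * w⁻¹ = 1 := mul_inv_cancel₀ hw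
      calc (1 : ℂ) - w * ee t = (w * w⁻¹) * (ee t * ee (-t)) - w * ee t := by rw [h1, h2]; ring
        _ = (-(w * ee t)) * (1 - w⁻¹ * ee (-t)) := by ring
    rw [hfac, map_mul, map_neg_eq_map, map_mul, ee_abs, mul_one,
      Real.log_mul (cabs.ne_zero hw) (cabs.ne_zero (hne (-t)))]
  have hper : Function.Periodic g 1 := by
    intro y; simp only [hg, ee_periodic y]
  have hint : IntervalIntegrable (fun t => g (-t)) volume 0 1 := by
    have := (psi_int w⁻¹ 0 (-1)).comp_mul_left (c := -1)
    simpa [hg] using this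
  calc Psi w = ∫ t in (0:ℝ)..1, (Real.log (cabs w) + g (-t)) := by
        rw [Psi]; exact intervalIntegral.integral_congr fun t _ => hkey t
    _ = (∫ t in (0:ℝ)..1, Real.log (cabs w)) + ∫ t in (0:ℝ)..1, g (-t) :=
        intervalIntegral.integral_add intervalIntegrable_const hint
    _ = Real.log (cabs w) + ∫ t in (0:ℝ)..1, g (-t) := by simp
    _ = Real.log (cabs w) := by
        have h1 : (∫ t in (0:ℝ)..1, g (-t)) = ∫ t in (-1:ℝ)..(-0), g t :=
          intervalIntegral.integral_comp_neg g
        have h2 : (∫ t in (-1:ℝ)..(-0), g t) = ∫ t in (-1:ℝ)..(-1+1), g t := by norm_num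
        have h3 : (∫ t in (-1:ℝ)..(-1+1), g t) = ∫ t in (0:ℝ)..(0+1), g t :=
          hper.intervalIntegral_add_eq (-1) 0
        have h4 : (∫ t in (0:ℝ)..(0+1), g t) = Psi w⁻¹ := by norm_num [Psi, hg]
        have h5 : Psi w⁻¹ = 0 := psi_zero_of_lt (by
          rw [map_inv₀]; exact inv_lt_one_of_one_lt₀ h)
        rw [h1, h2, h3, h4, h5, add_zero]

lemma psi_eq (w : ℂ) : Psi w = Real.log (max (cabs w) 1) := by
  rcases lt_trichotomy (cabs w) 1 with h | h | h
  · rw [psi_zero_of_lt h, max_eq_right h.le, Real.log_one]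
  · rw [psi_circle h, h, max_self, Real.log_one]
  · rw [psi_big h, max_eq_left h.le]

-- circle average of log |w - ee t|
lemma M_eq (w : ℂ) :
    (∫ t in (0:ℝ)..1, Real.log (cabs (w - ee t))) = Real.log (max (cabs w) 1) := by
  set g : ℝ → ℝ := fun y => Real.log (cabs (1 - w * ee y)) with hg
  have hper : Function.Periodic g 1 := by
    intro y; simp only [hg, ee_periodic y]
  have hkey : ∀ t : ℝ, Real.log (cabs (w - ee t)) = g (-t) := by
    intro t
    simp only [hg]
    have hfac : w - ee t = (-(ee t)) * (1 - w * ee (-t)) := by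
      have h1 : ee t * ee (-t) = 1 := by rw [← ee_add]; simp [ee_zero]
      calc w - ee t = w * (ee t * ee (-t)) - ee t := by rw [h1]; ring
        _ = (-(ee t)) * (1 - w * ee (-t)) := by ring
    rw [hfac, map_mul, map_neg_eq_map, ee_abs, one_mul]
  calc (∫ t in (0:ℝ)..1, Real.log (cabs (w - ee t)))
      = ∫ t in (0:ℝ)..1, g (-t) := intervalIntegral.integral_congr fun t _ => hkey t
    _ = ∫ t in (-1:ℝ)..(-0), g t := intervalIntegral.integral_comp_neg g
    _ = ∫ t in (-1:ℝ)..(-1+1), g t := by norm_num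
    _ = ∫ t in (0:ℝ)..(0+1), g t := hper.intervalIntegral_add_eq (-1) 0
    _ = Psi w := by norm_num [Psi, hg]
    _ = Real.log (max (cabs w) 1) := psi_eq w

lemma scaled {ε : ℝ} (hε : 0 < ε) (c : ℂ) :
    (∫ s in (0:ℝ)..1, Real.log (cabs (c - (ε:ℂ) * ee s)))
      = Real.log (max (cabs c) ε) := by
  have hεC : ((ε:ℝ):ℂ) ≠ 0 := by
    simp [Complex.ofReal_eq_zero, hε.ne']
  have hkey : ∀ s : ℝ, cabs (c - (ε:ℂ) * ee s) = ε * cabs (c/(ε:ℂ) - ee s) := by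
    intro s
    have : c - (ε:ℂ) * ee s = (ε:ℂ) * (c/(ε:ℂ) - ee s) := by field_simp
    rw [this, map_mul, cabs_ofReal, abs_of_pos hε]
  have hae : ∀ᵐ s : ℝ, s ∈ Set.uIoc (0:ℝ) 1 →
      Real.log (cabs (c - (ε:ℂ) * ee s))
        = Real.log ε + Real.log (cabs (c/(ε:ℂ) - ee s)) := by
    filter_upwards [(ee_fiber_countable (c/(ε:ℂ))).ae_notMem volume] with s hs _
    have hne : c/(ε:ℂ) - ee s ≠ 0 := by
      intro hz
      exact hs (show ee s = c/(ε:ℂ) by linear_combination -hz)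
    rw [hkey s, Real.log_mul hε.ne' (cabs.ne_zero hne)]
  have hint : IntervalIntegrable (fun s => Real.log (cabs (c/(ε:ℂ) - ee s))) volume 0 1 := by
    have := key_int (c/(ε:ℂ)) (-1) 0 1
    simpa [neg_mul, ← sub_eq_add_neg] using this
  calc (∫ s in (0:ℝ)..1, Real.log (cabs (c - (ε:ℂ) * ee s)))
      = ∫ s in (0:ℝ)..1, (Real.log ε + Real.log (cabs (c/(ε:ℂ) - ee s))) :=
        intervalIntegral.integral_congr_ae hae
    _ = (∫ s in (0:ℝ)..1, Real.log ε) + ∫ s in (0:ℝ)..1, Real.log (cabs (c/(ε:ℂ) - ee s)) :=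
        intervalIntegral.integral_add intervalIntegrable_const hint
    _ = Real.log ε + Real.log (max (cabs (c/(ε:ℂ))) 1) := by rw [M_eq]; simp
    _ = Real.log (max (cabs c) ε) := by
        have habs : cabs (c/(ε:ℂ)) = cabs c / ε := by
          rw [map_div₀, cabs_ofReal, abs_of_pos hε]
        have hmaxpos : (0:ℝ) < max (cabs c / ε) 1 := lt_of_lt_of_le one_pos (le_max_right _ _)
        rw [habs, ← Real.log_mul hε.ne' hmaxpos.ne']
        congr 1
        rw [mul_max_of_nonneg _ _ hε.le, mul_one, mul_div_cancel₀ _ hε.ne']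

lemma outer {ε : ℝ} (hε : 0 < ε) (a : ℂ) :
    (∫ t in (0:ℝ)..1, Real.log (cabs (a + (ε:ℂ) * ee t)))
      = Real.log (max (cabs a) ε) := by
  set f : ℝ → ℝ := fun u => Real.log (cabs (a - (ε:ℂ) * ee u)) with hfdef
  have hper : Function.Periodic f 1 := by
    intro y; simp only [hfdef, ee_periodic y]
  have hkey : ∀ t : ℝ, Real.log (cabs (a + (ε:ℂ) * ee t)) = f (t + 1/2) := by
    intro t
    simp only [hfdef, ee_half]
    ring_nf
  calc (∫ t in (0:ℝ)..1, Real.log (cabs (a + (ε:ℂ) * ee t)))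
      = ∫ t in (0:ℝ)..1, f (t + 1/2) := intervalIntegral.integral_congr fun t _ => hkey t
    _ = ∫ t in (0+1/2:ℝ)..(1+1/2), f t := intervalIntegral.integral_comp_add_right f (1/2)
    _ = ∫ t in (1/2:ℝ)..(1/2+1), f t := by norm_num
    _ = ∫ t in (0:ℝ)..(0+1), f t := hper.intervalIntegral_add_eq (1/2) 0
    _ = Real.log (max (cabs a) ε) := by
        rw [show ((0:ℝ)+1) = 1 by norm_num]
        exact scaled hε a

lemma inner_eq {ε : ℝ} (hε : 0 < ε) (x x' : ℂ) (t : ℝ) :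
    (∫ s in (0:ℝ)..1, -Real.log (cabs ((x + (ε:ℂ) * ee t) - (x' + (ε:ℂ) * ee s))))
      = -Real.log (max (cabs ((x - x') + (ε:ℂ) * ee t)) ε) := by
  have hre : ∀ s : ℝ, (x + (ε:ℂ) * ee t) - (x' + (ε:ℂ) * ee s)
      = ((x - x') + (ε:ℂ) * ee t) - (ε:ℂ) * ee s := by intro s; ring
  calc (∫ s in (0:ℝ)..1, -Real.log (cabs ((x + (ε:ℂ) * ee t) - (x' + (ε:ℂ) * ee s))))
      = ∫ s in (0:ℝ)..1, -Real.log (cabs (((x - x') + (ε:ℂ) * ee t) - (ε:ℂ) * ee s)) := by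
        apply intervalIntegral.integral_congr
        intro s _
        simp only
        rw [hre s]
    _ = -∫ s in (0:ℝ)..1, Real.log (cabs (((x - x') + (ε:ℂ) * ee t) - (ε:ℂ) * ee s)) :=
        intervalIntegral.integral_neg
    _ = -Real.log (max (cabs ((x - x') + (ε:ℂ) * ee t)) ε) := by
        rw [scaled hε]

lemma pair_diag {ε : ℝ} (hε : 0 < ε) (x : ℂ) :
    (∫ t in (0:ℝ)..1, ∫ s in (0:ℝ)..1,
      -Real.log (cabs ((x + (ε:ℂ) * ee t) - (x + (ε:ℂ) * ee s)))) = -Real.log ε := by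
  have h1 : ∀ t : ℝ, (∫ s in (0:ℝ)..1,
      -Real.log (cabs ((x + (ε:ℂ) * ee t) - (x + (ε:ℂ) * ee s)))) = -Real.log ε := by
    intro t
    rw [inner_eq hε x x t]
    congr 2
    have : (x - x) + (ε:ℂ) * ee t = (ε:ℂ) * ee t := by ring
    rw [this, map_mul, cabs_ofReal, abs_of_pos hε, ee_abs, mul_one, max_self]
  rw [intervalIntegral.integral_congr (fun t _ => h1 t)]
  simp

lemma pair_off {ε : ℝ} (hε : 0 < ε) (x x' : ℂ) (hne : x ≠ x') :
    (∫ t in (0:ℝ)..1, ∫ s in (0:ℝ)..1,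
      -Real.log (cabs ((x + (ε:ℂ) * ee t) - (x' + (ε:ℂ) * ee s))))
      ≤ -Real.log (cabs (x - x')) := by
  set a : ℂ := x - x' with ha
  have ha0 : a ≠ 0 := sub_ne_zero.mpr hne
  have step1 : (∫ t in (0:ℝ)..1, ∫ s in (0:ℝ)..1,
      -Real.log (cabs ((x + (ε:ℂ) * ee t) - (x' + (ε:ℂ) * ee s))))
      = ∫ t in (0:ℝ)..1, -Real.log (max (cabs (a + (ε:ℂ) * ee t)) ε) :=
    intervalIntegral.integral_congr (fun t _ => inner_eq hε x x' t)
  have hcont : Continuous fun t => -Real.log (max (cabs (a + (ε:ℂ) * ee t)) ε) := by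
    apply Continuous.neg
    apply Continuous.log
    · exact (continuous_cabs.comp
        (continuous_const.add (continuous_const.mul ee_continuous))).max continuous_const
    · intro t
      exact (lt_of_lt_of_le hε (le_max_right _ _)).ne'
  have hint2 : IntervalIntegrable (fun t => -Real.log (cabs (a + (ε:ℂ) * ee t)))
      volume 0 1 := (key_int a (ε:ℂ) 0 1).neg
  have step2 : (∫ t in (0:ℝ)..1, -Real.log (max (cabs (a + (ε:ℂ) * ee t)) ε))
      ≤ ∫ t in (0:ℝ)..1, -Real.log (cabs (a + (ε:ℂ) * ee t)) := by
    apply intervalIntegral.integral_mono_ae (by norm_num) (hcont.intervalIntegrable 0 1) hint2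
    filter_upwards [(ee_fiber_countable (-(a/(ε:ℂ)))).ae_notMem volume] with t ht
    have hεC : ((ε:ℝ):ℂ) ≠ 0 := by simp [Complex.ofReal_eq_zero, hε.ne']
    have hnz : a + (ε:ℂ) * ee t ≠ 0 := by
      intro hz
      apply ht
      show ee t = -(a/(ε:ℂ))
      field_simp
      linear_combination hz
    have hpos : 0 < cabs (a + (ε:ℂ) * ee t) := cabs.pos hnz
    exact neg_le_neg (Real.log_le_log hpos (le_max_left _ _))
  have step3 : (∫ t in (0:ℝ)..1, -Real.log (cabs (a + (ε:ℂ) * ee t)))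
      = -Real.log (max (cabs a) ε) := by
    rw [intervalIntegral.integral_neg, outer hε]
  have step4 : -Real.log (max (cabs a) ε) ≤ -Real.log (cabs a) :=
    neg_le_neg (Real.log_le_log (cabs.pos ha0) (le_max_left _ _))
  rw [step1]
  calc (∫ t in (0:ℝ)..1, -Real.log (max (cabs (a + (ε:ℂ) * ee t)) ε))
      ≤ ∫ t in (0:ℝ)..1, -Real.log (cabs (a + (ε:ℂ) * ee t)) := step2
    _ = -Real.log (max (cabs a) ε) := step3
    _ ≤ -Real.log (cabs a) := step4

theorem statement6 (F : Finset ℂ) (hF : F.Nonempty) (ε : ℝ) (hε : 0 < ε) :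
    ((F.card : ℝ) ^ 2)⁻¹ * ∑ x ∈ F, ∑ x' ∈ F,
        (∫ t in (0:ℝ)..1, ∫ s in (0:ℝ)..1,
          -Real.log (Norm.norm ((x + (ε : ℂ) * Complex.exp (2 * Real.pi * Complex.I * (t : ℂ)))
            - (x' + (ε : ℂ) * Complex.exp (2 * Real.pi * Complex.I * (s : ℂ)))))) ≤
      ((F.card : ℝ) ^ 2)⁻¹ * (∑ x ∈ F, ∑ x' ∈ F.erase x, -Real.log (Norm.norm (x - x')))
        - Real.log ε / (F.card : ℝ) := by
  have hEE : ∀ u : ℝ, Complex.exp (2 * Real.pi * Complex.I * (u : ℂ)) = ee u := fun _ => rfl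
  simp only [hEE]
  simp only [norm_eq_cabs]
  have hn : (0:ℝ) < (F.card : ℝ) := by
    exact_mod_cast Nat.cast_pos.mpr (Finset.card_pos.mpr hF)
  have key : (∑ x ∈ F, ∑ x' ∈ F, (∫ t in (0:ℝ)..1, ∫ s in (0:ℝ)..1,
        -Real.log (cabs ((x + (ε : ℂ) * ee t) - (x' + (ε : ℂ) * ee s)))))
      ≤ (F.card : ℝ) * (-Real.log ε)
        + ∑ x ∈ F, ∑ x' ∈ F.erase x, -Real.log (cabs (x - x')) := by
    have hx : ∀ x ∈ F, (∑ x' ∈ F, (∫ t in (0:ℝ)..1, ∫ s in (0:ℝ)..1,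
        -Real.log (cabs ((x + (ε : ℂ) * ee t) - (x' + (ε : ℂ) * ee s)))))
        ≤ -Real.log ε + ∑ x' ∈ F.erase x, -Real.log (cabs (x - x')) := by
      intro x hx
      rw [← Finset.add_sum_erase F _ hx]
      apply add_le_add
      · exact le_of_eq (pair_diag hε x)
      · apply Finset.sum_le_sum
        intro x' hx'
        exact pair_off hε x x' (Finset.ne_of_mem_erase hx').symm
    calc (∑ x ∈ F, ∑ x' ∈ F, (∫ t in (0:ℝ)..1, ∫ s in (0:ℝ)..1,
          -Real.log (cabs ((x + (ε : ℂ) * ee t) - (x' + (ε : ℂ) * ee s)))))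
        ≤ ∑ x ∈ F, (-Real.log ε + ∑ x' ∈ F.erase x, -Real.log (cabs (x - x'))) :=
          Finset.sum_le_sum hx
      _ = (F.card : ℝ) * (-Real.log ε)
          + ∑ x ∈ F, ∑ x' ∈ F.erase x, -Real.log (cabs (x - x')) := by
          rw [Finset.sum_add_distrib, Finset.sum_const, nsmul_eq_mul]
  have h2 := mul_le_mul_of_nonneg_left key (inv_nonneg.mpr (sq_nonneg (F.card : ℝ)))
  refine le_trans h2 (le_of_eq ?_)
  field_simp
  ring
end

section
/- For every real δ with 0 < δ < 1 and every x ∈ ℝ, one has μ_ℝ([x−δ, x+δ]) ≤ 4·√δ. -/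
open MeasureTheory

section Aux
open Real Set

-- √(a+b) ≤ √a + √b
lemma my_sqrt_subadd {a b : ℝ} (ha : 0 ≤ a) (hb : 0 ≤ b) :
    Real.sqrt (a + b) ≤ Real.sqrt a + Real.sqrt b := by
  have h := Real.sqrt_le_sqrt (show a + b ≤ (Real.sqrt a + Real.sqrt b) ^ 2 by
    nlinarith [Real.sq_sqrt ha, Real.sq_sqrt hb, Real.sqrt_nonneg a, Real.sqrt_nonneg b])
  simpa [Real.sqrt_sq (by positivity : (0:ℝ) ≤ Real.sqrt a + Real.sqrt b)] using h

lemma my_sqrt_cs {a b : ℝ} (ha : 0 ≤ a) (hb : 0 ≤ b) :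
    Real.sqrt a + Real.sqrt b ≤ Real.sqrt 2 * Real.sqrt (a + b) := by
  rw [← Real.sqrt_mul (by norm_num : (0:ℝ) ≤ 2)]
  have h := Real.sqrt_le_sqrt (show (Real.sqrt a + Real.sqrt b) ^ 2 ≤ 2 * (a + b) by
    nlinarith [sq_nonneg (Real.sqrt a - Real.sqrt b), Real.sq_sqrt ha, Real.sq_sqrt hb])
  simpa [Real.sqrt_sq (by positivity : (0:ℝ) ≤ Real.sqrt a + Real.sqrt b)] using h

lemma my_int_right (c p q : ℝ) (hcp : c ≤ p) (hpq : p ≤ q) :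
    ∫⁻ z in Set.Icc p q, ENNReal.ofReal (|z - c| ^ (-(1/2) : ℝ)) ≤
      ENNReal.ofReal (2 * Real.sqrt (q - p)) := by
  have hcong : ∫⁻ z in Set.Icc p q, ENNReal.ofReal (|z - c| ^ (-(1/2) : ℝ)) =
      ∫⁻ z in Set.Icc p q, ENNReal.ofReal ((z - c) ^ (-(1/2) : ℝ)) := by
    refine setLIntegral_congr_fun measurableSet_Icc (fun z hz => ?_)
    rw [abs_of_nonneg (by linarith [hz.1])]
  rw [hcong]
  have hint : IntervalIntegrable (fun z => (z - c) ^ (-(1/2) : ℝ)) volume p q := by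
    have h := (intervalIntegral.intervalIntegrable_rpow' (a := p - c) (b := q - c)
      (show (-1:ℝ) < -(1/2) by norm_num)).comp_sub_right c
    simpa using h
  have hIcc : IntegrableOn (fun z => (z - c) ^ (-(1/2) : ℝ)) (Set.Icc p q) volume :=
    (intervalIntegrable_iff_integrableOn_Icc_of_le hpq).1 hint
  have hnn : 0 ≤ᵐ[volume.restrict (Set.Icc p q)] fun z => (z - c) ^ (-(1/2) : ℝ) :=
    (ae_restrict_iff' measurableSet_Icc).2 (Filter.Eventually.of_forall fun z hz =>
      Real.rpow_nonneg (by linarith [hz.1]) _)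
  rw [← ofReal_integral_eq_lintegral_ofReal hIcc hnn]
  have hval : ∫ z in Set.Icc p q, (z - c) ^ (-(1/2) : ℝ) =
      2 * Real.sqrt (q - c) - 2 * Real.sqrt (p - c) := by
    rw [MeasureTheory.integral_Icc_eq_integral_Ioc, ← intervalIntegral.integral_of_le hpq,
      intervalIntegral.integral_comp_sub_right (fun x => x ^ (-(1/2) : ℝ)) c,
      integral_rpow (Or.inl (by norm_num : (-1:ℝ) < -(1/2)))]
    rw [show (-(1/2 : ℝ) + 1) = 1/2 by norm_num, Real.sqrt_eq_rpow, Real.sqrt_eq_rpow]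
    ring
  rw [hval]
  apply ENNReal.ofReal_le_ofReal
  have h1 : Real.sqrt (q - c) ≤ Real.sqrt (p - c) + Real.sqrt (q - p) := by
    have := my_sqrt_subadd (show (0:ℝ) ≤ p - c by linarith) (show (0:ℝ) ≤ q - p by linarith)
    calc Real.sqrt (q - c) = Real.sqrt ((p - c) + (q - p)) := by ring_nf
      _ ≤ _ := this
  linarith

lemma my_int_left (c p q : ℝ) (hqc : q ≤ c) (hpq : p ≤ q) :
    ∫⁻ z in Set.Icc p q, ENNReal.ofReal (|z - c| ^ (-(1/2) : ℝ)) ≤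
      ENNReal.ofReal (2 * Real.sqrt (q - p)) := by
  have hcong : ∫⁻ z in Set.Icc p q, ENNReal.ofReal (|z - c| ^ (-(1/2) : ℝ)) =
      ∫⁻ z in Set.Icc p q, ENNReal.ofReal ((c - z) ^ (-(1/2) : ℝ)) := by
    refine setLIntegral_congr_fun measurableSet_Icc (fun z hz => ?_)
    rw [abs_of_nonpos (by linarith [hz.2]), neg_sub]
  rw [hcong]
  have hint : IntervalIntegrable (fun z => (c - z) ^ (-(1/2) : ℝ)) volume p q := by
    have h := (intervalIntegral.intervalIntegrable_rpow' (a := c - p) (b := c - q)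
      (show (-1:ℝ) < -(1/2) by norm_num)).comp_sub_left c
    simpa using h
  have hIcc : IntegrableOn (fun z => (c - z) ^ (-(1/2) : ℝ)) (Set.Icc p q) volume :=
    (intervalIntegrable_iff_integrableOn_Icc_of_le hpq).1 hint
  have hnn : 0 ≤ᵐ[volume.restrict (Set.Icc p q)] fun z => (c - z) ^ (-(1/2) : ℝ) :=
    (ae_restrict_iff' measurableSet_Icc).2 (Filter.Eventually.of_forall fun z hz =>
      Real.rpow_nonneg (by linarith [hz.2]) _)
  rw [← ofReal_integral_eq_lintegral_ofReal hIcc hnn]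
  have hval : ∫ z in Set.Icc p q, (c - z) ^ (-(1/2) : ℝ) =
      2 * Real.sqrt (c - p) - 2 * Real.sqrt (c - q) := by
    rw [MeasureTheory.integral_Icc_eq_integral_Ioc, ← intervalIntegral.integral_of_le hpq,
      intervalIntegral.integral_comp_sub_left (fun x => x ^ (-(1/2) : ℝ)) c,
      integral_rpow (Or.inl (by norm_num : (-1:ℝ) < -(1/2)))]
    rw [show (-(1/2 : ℝ) + 1) = 1/2 by norm_num, Real.sqrt_eq_rpow, Real.sqrt_eq_rpow]
    ring
  rw [hval]
  apply ENNReal.ofReal_le_ofReal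
  have h1 : Real.sqrt (c - p) ≤ Real.sqrt (c - q) + Real.sqrt (q - p) := by
    have := my_sqrt_subadd (show (0:ℝ) ≤ c - q by linarith) (show (0:ℝ) ≤ q - p by linarith)
    calc Real.sqrt (c - p) = Real.sqrt ((c - q) + (q - p)) := by ring_nf
      _ ≤ _ := this
  linarith

lemma my_log_le_div_e {s : ℝ} (hs : 0 < s) : Real.log s ≤ s / Real.exp 1 := by
  have h1 : Real.log (s / Real.exp 1) ≤ s / Real.exp 1 - 1 :=
    Real.log_le_sub_one_of_pos (by positivity)
  rw [Real.log_div hs.ne' (Real.exp_ne_zero 1), Real.log_exp] at h1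
  linarith

lemma my_log_le_sqrt {s : ℝ} (hs : 0 < s) :
    Real.log s ≤ 2 / Real.exp 1 * Real.sqrt s := by
  have h1 : Real.log s = 2 * Real.log (Real.sqrt s) := by
    rw [Real.log_sqrt hs.le]; ring
  have h2 : Real.log (Real.sqrt s) ≤ Real.sqrt s / Real.exp 1 :=
    my_log_le_div_e (Real.sqrt_pos.2 hs)
  have h3 : 2 * (Real.sqrt s / Real.exp 1) = 2 / Real.exp 1 * Real.sqrt s := by ring
  rw [h1]
  linarith [h3]

lemma my_pi_sq : (9:ℝ) ≤ Real.pi ^ 2 := by nlinarith [Real.pi_gt_three]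

lemma my_e_ge : (2:ℝ) ≤ Real.exp 1 := by
  have := Real.add_one_le_exp (1:ℝ); linarith

lemma my_sqrt2_le : Real.sqrt 2 ≤ 1.5 := by
  rw [show (1.5:ℝ) = Real.sqrt (1.5 ^ 2) from (Real.sqrt_sq (by norm_num)).symm]
  exact Real.sqrt_le_sqrt (by norm_num)

lemma my_density_bd_pos (z : ℝ) (hz : 0 ≤ z) :
    1 / (Real.pi ^ 2 * z) * Real.log |(z + 1) / (z - 1)| ≤
      1 / 2 * |z - 1| ^ (-(1/2) : ℝ) := by
  have hπ := my_pi_sq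
  have he := my_e_ge
  have hs2 := my_sqrt2_le
  have hπ0 : (0:ℝ) < Real.pi ^ 2 := by positivity
  have he0 : (0:ℝ) < Real.exp 1 := Real.exp_pos 1
  rcases eq_or_lt_of_le hz with h0 | h0
  · rw [← h0]
    norm_num
  rcases lt_trichotomy z 1 with h1 | h1 | h1
  · -- 0 < z < 1
    have hu : (0:ℝ) < 1 - z := by linarith
    have habs : |(z + 1) / (z - 1)| = (z + 1) / (1 - z) := by
      rw [abs_div, abs_of_pos (by linarith : (0:ℝ) < z + 1),
        abs_of_neg (by linarith : z - 1 < 0)]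
      ring_nf
    have habs2 : |z - 1| = 1 - z := by
      rw [abs_of_neg (by linarith : z - 1 < 0)]; ring
    rw [habs, habs2]
    set S := Real.sqrt (1 - z) with hS
    have hS0 : 0 < S := Real.sqrt_pos.2 hu
    have hrpow : (1 - z) ^ (-(1/2) : ℝ) = 1 / S := by
      rw [Real.rpow_neg hu.le, ← Real.sqrt_eq_rpow, one_div]
    rw [hrpow]
    have hS1 : S ≤ 1 := by
      rw [hS]
      exact Real.sqrt_le_one.mpr (by linarith)
    rcases le_or_gt z (1/2) with h2 | h2
    · -- 0 < z ≤ 1/2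
      have hlog : Real.log ((z + 1) / (1 - z)) ≤ 2 * z / (1 - z) := by
        have h := Real.log_le_sub_one_of_pos (show (0:ℝ) < (z + 1) / (1 - z) by positivity)
        have heq : (z + 1) / (1 - z) - 1 = 2 * z / (1 - z) := by field_simp; ring
        linarith [heq ▸ h]
      have hL : 1 / (Real.pi ^ 2 * z) * Real.log ((z + 1) / (1 - z)) ≤
          2 / (Real.pi ^ 2 * (1 - z)) := by
        rw [div_mul_eq_mul_div, one_mul, div_le_div_iff₀ (by positivity) (by positivity)]
        calc Real.log ((z + 1) / (1 - z)) * (Real.pi ^ 2 * (1 - z))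
            ≤ (2 * z / (1 - z)) * (Real.pi ^ 2 * (1 - z)) :=
              mul_le_mul_of_nonneg_right hlog (by positivity)
          _ = 2 * (Real.pi ^ 2 * z) := by field_simp
      have h3 : 2 / (Real.pi ^ 2 * (1 - z)) ≤ 4 / 9 := by
        rw [div_le_div_iff₀ (by positivity) (by norm_num)]
        nlinarith
      have h4 : (1:ℝ) / 2 ≤ 1 / 2 * (1 / S) := by
        rw [mul_one_div, le_div_iff₀ hS0]
        linarith
      linarith
    · -- 1/2 < z < 1
      have hLnn : 0 ≤ Real.log ((z + 1) / (1 - z)) :=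
        Real.log_nonneg (by rw [le_div_iff₀ hu]; linarith)
      have hz2 : 1 / (Real.pi ^ 2 * z) ≤ 2 / Real.pi ^ 2 := by
        rw [div_le_div_iff₀ (by positivity) hπ0]
        nlinarith
      have step1 : 1 / (Real.pi ^ 2 * z) * Real.log ((z + 1) / (1 - z)) ≤
          2 / Real.pi ^ 2 * Real.log ((z + 1) / (1 - z)) :=
        mul_le_mul_of_nonneg_right hz2 hLnn
      have hlog : Real.log ((z + 1) / (1 - z)) ≤ Real.log (2 / (1 - z)) := by
        apply Real.log_le_log (by positivity)
        gcongr
        linarith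
      have hlog2 : Real.log (2 / (1 - z)) ≤ 2 / Real.exp 1 * (Real.sqrt 2 / S) := by
        have h := my_log_le_sqrt (show (0:ℝ) < 2 / (1 - z) by positivity)
        rwa [Real.sqrt_div (by norm_num : (0:ℝ) ≤ 2)] at h
      have key : 2 / Real.pi ^ 2 * (2 / Real.exp 1 * (Real.sqrt 2 / S)) =
          2 / Real.pi ^ 2 * (2 / Real.exp 1 * Real.sqrt 2) * (1 / S) := by ring
      have hc : 2 / Real.pi ^ 2 * (2 / Real.exp 1 * Real.sqrt 2) ≤ 1 / 2 := by
        have c1 : 2 / Real.pi ^ 2 ≤ 2 / 9 := by gcongr <;> norm_num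
        have c2 : 2 / Real.exp 1 ≤ 1 := by rw [div_le_one he0]; linarith
        calc 2 / Real.pi ^ 2 * (2 / Real.exp 1 * Real.sqrt 2) ≤ 2 / 9 * (1 * 1.5) := by
              apply mul_le_mul c1 ?_ (by positivity) (by norm_num)
              exact mul_le_mul c2 hs2 (Real.sqrt_nonneg 2) (by norm_num)
          _ ≤ 1 / 2 := by norm_num
      calc 1 / (Real.pi ^ 2 * z) * Real.log ((z + 1) / (1 - z))
          ≤ 2 / Real.pi ^ 2 * Real.log ((z + 1) / (1 - z)) := step1
        _ ≤ 2 / Real.pi ^ 2 * (2 / Real.exp 1 * (Real.sqrt 2 / S)) := by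
            apply mul_le_mul_of_nonneg_left (le_trans hlog hlog2) (by positivity)
        _ = 2 / Real.pi ^ 2 * (2 / Real.exp 1 * Real.sqrt 2) * (1 / S) := key
        _ ≤ 1 / 2 * (1 / S) := mul_le_mul_of_nonneg_right hc (by positivity)
  · -- z = 1
    subst h1
    norm_num [Real.zero_rpow]
  · -- 1 < z
    have hu : (0:ℝ) < z - 1 := by linarith
    have habs : |(z + 1) / (z - 1)| = (z + 1) / (z - 1) := by
      rw [abs_div, abs_of_pos (by linarith : (0:ℝ) < z + 1), abs_of_pos hu]
    have habs2 : |z - 1| = z - 1 := abs_of_pos hu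
    rw [habs, habs2]
    set S := Real.sqrt (z - 1) with hS
    have hS0 : 0 < S := Real.sqrt_pos.2 hu
    have hrpow : (z - 1) ^ (-(1/2) : ℝ) = 1 / S := by
      rw [Real.rpow_neg hu.le, ← Real.sqrt_eq_rpow, one_div]
    rw [hrpow]
    have hlog : Real.log ((z + 1) / (z - 1)) ≤ 2 / Real.exp 1 * (Real.sqrt (z + 1) / S) := by
      have h := my_log_le_sqrt (show (0:ℝ) < (z + 1) / (z - 1) by positivity)
      rwa [Real.sqrt_div (by linarith : (0:ℝ) ≤ z + 1)] at h
    have hsq : Real.sqrt (z + 1) ≤ Real.sqrt 2 * z := by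
      have h1' : z + 1 ≤ 2 * z ^ 2 := by nlinarith
      calc Real.sqrt (z + 1) ≤ Real.sqrt (2 * z ^ 2) := Real.sqrt_le_sqrt h1'
        _ = Real.sqrt 2 * z := by
            rw [Real.sqrt_mul (by norm_num) (z ^ 2), Real.sqrt_sq (by linarith)]
    have step1 : 1 / (Real.pi ^ 2 * z) * Real.log ((z + 1) / (z - 1)) ≤
        1 / (Real.pi ^ 2 * z) * (2 / Real.exp 1 * (Real.sqrt 2 * z / S)) := by
      apply mul_le_mul_of_nonneg_left ?_ (by positivity)
      refine le_trans hlog ?_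
      have hdiv : Real.sqrt (z + 1) / S ≤ Real.sqrt 2 * z / S := by gcongr
      exact mul_le_mul_of_nonneg_left hdiv (by positivity)
    have key : 1 / (Real.pi ^ 2 * z) * (2 / Real.exp 1 * (Real.sqrt 2 * z / S)) =
        2 * Real.sqrt 2 / (Real.exp 1 * Real.pi ^ 2) * (1 / S) := by
      have hz0 : z ≠ 0 := ne_of_gt h0
      have hSne : S ≠ 0 := ne_of_gt hS0
      field_simp
    have hc : 2 * Real.sqrt 2 / (Real.exp 1 * Real.pi ^ 2) ≤ 1 / 2 := by
      have c1 : 2 * Real.sqrt 2 ≤ 3 := by linarith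
      have c2 : (18:ℝ) ≤ Real.exp 1 * Real.pi ^ 2 := by nlinarith
      rw [div_le_div_iff₀ (by positivity) (by norm_num)]
      nlinarith [Real.sqrt_nonneg 2]
    calc 1 / (Real.pi ^ 2 * z) * Real.log ((z + 1) / (z - 1))
        ≤ 1 / (Real.pi ^ 2 * z) * (2 / Real.exp 1 * (Real.sqrt 2 * z / S)) := step1
      _ = 2 * Real.sqrt 2 / (Real.exp 1 * Real.pi ^ 2) * (1 / S) := key
      _ ≤ 1 / 2 * (1 / S) := mul_le_mul_of_nonneg_right hc (by positivity)

lemma my_even (z : ℝ) :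
    1 / (Real.pi ^ 2 * z) * Real.log |(z + 1) / (z - 1)| =
      1 / (Real.pi ^ 2 * (-z)) * Real.log |(-z + 1) / (-z - 1)| := by
  have h1 : (-z + 1) / (-z - 1) = (z - 1) / (z + 1) := by
    rw [show -z + 1 = -(z - 1) by ring, show -z - 1 = -(z + 1) by ring, neg_div_neg_eq]
  rw [h1, show |(z - 1) / (z + 1)| = |(z + 1) / (z - 1)|⁻¹ by rw [← abs_inv, inv_div],
    Real.log_inv]
  ring

lemma my_density_bd (z : ℝ) :
    1 / (Real.pi ^ 2 * z) * Real.log |(z + 1) / (z - 1)| ≤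
      1 / 2 * |z - 1| ^ (-(1/2) : ℝ) + 1 / 2 * |z + 1| ^ (-(1/2) : ℝ) := by
  have t1 : (0:ℝ) ≤ 1 / 2 * |z - 1| ^ (-(1/2) : ℝ) := by positivity
  have t2 : (0:ℝ) ≤ 1 / 2 * |z + 1| ^ (-(1/2) : ℝ) := by positivity
  rcases le_or_gt 0 z with h | h
  · linarith [my_density_bd_pos z h]
  · have h2 := my_density_bd_pos (-z) (by linarith)
    have h3 : |(-z) - 1| = |z + 1| := by
      rw [show -z - 1 = -(z + 1) by ring, abs_neg]
    rw [h3] at h2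
    rw [my_even z]
    linarith

lemma my_sqrt4 : Real.sqrt 4 = 2 := by
  rw [show (4:ℝ) = 2 ^ 2 by norm_num, Real.sqrt_sq (by norm_num)]

lemma my_term (c x δ : ℝ) (hδ : 0 < δ) :
    ∫⁻ z in Set.Icc (x - δ) (x + δ), ENNReal.ofReal (1 / 2 * |z - c| ^ (-(1/2) : ℝ)) ≤
      ENNReal.ofReal (2 * Real.sqrt δ) := by
  have hpq : x - δ ≤ x + δ := by linarith
  have hmeas : Measurable fun z : ℝ => ENNReal.ofReal (|z - c| ^ (-(1/2) : ℝ)) := by fun_prop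
  have hhalf : ∀ z : ℝ, ENNReal.ofReal (1 / 2 * |z - c| ^ (-(1/2) : ℝ)) =
      ENNReal.ofReal (1 / 2) * ENNReal.ofReal (|z - c| ^ (-(1/2) : ℝ)) := fun z =>
    ENNReal.ofReal_mul (by norm_num)
  simp_rw [hhalf]
  rw [lintegral_const_mul _ hmeas]
  have hsd : Real.sqrt 2 * Real.sqrt (2 * δ) = 2 * Real.sqrt δ := by
    rw [← Real.sqrt_mul (by norm_num) (2 * δ), show (2:ℝ) * (2 * δ) = 4 * δ by ring,
      Real.sqrt_mul (by norm_num) δ, my_sqrt4]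
  have key : ∫⁻ z in Set.Icc (x - δ) (x + δ), ENNReal.ofReal (|z - c| ^ (-(1/2) : ℝ)) ≤
      ENNReal.ofReal (4 * Real.sqrt δ) := by
    have hlen : (x + δ) - (x - δ) = 2 * δ := by ring
    rcases le_or_gt c (x - δ) with hc | hc
    · refine le_trans (my_int_right c _ _ hc hpq) (ENNReal.ofReal_le_ofReal ?_)
      rw [hlen]
      have h1 : Real.sqrt (2 * δ) = Real.sqrt 2 * Real.sqrt δ := Real.sqrt_mul (by norm_num) δ
      nlinarith [Real.sqrt_nonneg δ, my_sqrt2_le]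
    rcases le_or_gt (x + δ) c with hc2 | hc2
    · refine le_trans (my_int_left c _ _ hc2 hpq) (ENNReal.ofReal_le_ofReal ?_)
      rw [hlen]
      have h1 : Real.sqrt (2 * δ) = Real.sqrt 2 * Real.sqrt δ := Real.sqrt_mul (by norm_num) δ
      nlinarith [Real.sqrt_nonneg δ, my_sqrt2_le]
    · have hsplit : Set.Icc (x - δ) (x + δ) = Set.Icc (x - δ) c ∪ Set.Icc c (x + δ) :=
        (Set.Icc_union_Icc_eq_Icc hc.le hc2.le).symm
      rw [hsplit]
      refine le_trans (lintegral_union_le _ _ _) ?_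
      refine le_trans (add_le_add (my_int_left c _ _ le_rfl hc.le)
        (my_int_right c _ _ le_rfl hc2.le)) ?_
      rw [← ENNReal.ofReal_add (by positivity) (by positivity)]
      apply ENNReal.ofReal_le_ofReal
      have hcs := my_sqrt_cs (show (0:ℝ) ≤ c - (x - δ) by linarith)
        (show (0:ℝ) ≤ (x + δ) - c by linarith)
      rw [show (c - (x - δ)) + ((x + δ) - c) = 2 * δ by ring, hsd] at hcs
      linarith
  calc ENNReal.ofReal (1 / 2) *
        ∫⁻ z in Set.Icc (x - δ) (x + δ), ENNReal.ofReal (|z - c| ^ (-(1/2) : ℝ))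
      ≤ ENNReal.ofReal (1 / 2) * ENNReal.ofReal (4 * Real.sqrt δ) :=
        mul_le_mul_right key _
    _ = ENNReal.ofReal (1 / 2 * (4 * Real.sqrt δ)) := (ENNReal.ofReal_mul (by norm_num)).symm
    _ = ENNReal.ofReal (2 * Real.sqrt δ) := by rw [show 1 / 2 * (4 * Real.sqrt δ) = 2 * Real.sqrt δ by ring]

end Aux

/-- The measure dμ_ℝ(z) = (1/(π² z))·log|(z+1)/(z−1)| dz on ℝ. -/
noncomputable def muR : Measure ℝ :=
  volume.withDensity fun z => ENNReal.ofReal (1 / (Real.pi ^ 2 * z) * Real.log |(z + 1) / (z - 1)|)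

theorem statement9 (δ : ℝ) (hδ0 : 0 < δ) (hδ1 : δ < 1) (x : ℝ) :
    muR (Set.Icc (x - δ) (x + δ)) ≤ ENNReal.ofReal (4 * Real.sqrt δ) := by
  rw [muR, withDensity_apply _ measurableSet_Icc]
  have hmeas1 : Measurable fun z : ℝ => ENNReal.ofReal (1 / 2 * |z - 1| ^ (-(1/2) : ℝ)) := by
    fun_prop
  calc ∫⁻ z in Set.Icc (x - δ) (x + δ),
        ENNReal.ofReal (1 / (Real.pi ^ 2 * z) * Real.log |(z + 1) / (z - 1)|)
      ≤ ∫⁻ z in Set.Icc (x - δ) (x + δ),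
        (ENNReal.ofReal (1 / 2 * |z - 1| ^ (-(1/2) : ℝ)) +
          ENNReal.ofReal (1 / 2 * |z + 1| ^ (-(1/2) : ℝ))) := by
        refine lintegral_mono fun z => ?_
        rw [← ENNReal.ofReal_add (by positivity) (by positivity)]
        exact ENNReal.ofReal_le_ofReal (my_density_bd z)
    _ = (∫⁻ z in Set.Icc (x - δ) (x + δ), ENNReal.ofReal (1 / 2 * |z - 1| ^ (-(1/2) : ℝ))) +
        ∫⁻ z in Set.Icc (x - δ) (x + δ), ENNReal.ofReal (1 / 2 * |z + 1| ^ (-(1/2) : ℝ)) :=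
        lintegral_add_left hmeas1 _
    _ ≤ ENNReal.ofReal (2 * Real.sqrt δ) + ENNReal.ofReal (2 * Real.sqrt δ) := by
        have h1 := my_term 1 x δ hδ0
        have h2 := my_term (-1) x δ hδ0
        simp only [sub_neg_eq_add] at h2
        exact add_le_add h1 h2
    _ = ENNReal.ofReal (4 * Real.sqrt δ) := by
        rw [← ENNReal.ofReal_add (by positivity) (by positivity)]
        congr 1
        ring
end

section
/- For every real y with 0 < y < 1 and all x, z ∈ ℝ with |x−z| ≥ √y, one has log( 1 + y²/(x−z)² ) ≤ y·log( 1 + 1/(x−z)² ). -/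
theorem statement10 (y : ℝ) (hy0 : 0 < y) (hy1 : y < 1) (x z : ℝ)
    (hxz : Real.sqrt y ≤ |x - z|) :
    Real.log (1 + y ^ 2 / (x - z) ^ 2) ≤ y * Real.log (1 + 1 / (x - z) ^ 2) := by
  set c : ℝ := (x - z) ^ 2 with hc
  have hyc : y ≤ c := by
    have := pow_le_pow_left₀ (Real.sqrt_nonneg y) hxz 2
    rwa [Real.sq_sqrt hy0.le, sq_abs] at this
  have hcpos : 0 < c := lt_of_lt_of_le hy0 hyc
  set l : ℝ := y / c with hl
  have hl0 : 0 ≤ l := by positivity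
  have hl1 : l ≤ 1 := (div_le_one hcpos).2 hyc
  -- key endpoint inequality : 1 + y ≤ (1 + 1/y) ^ y
  have hkey : 1 + y ≤ (1 + 1 / y) ^ (y : ℝ) := by
    have hlogy : Real.log y ≤ y - 1 := Real.log_le_sub_one_of_pos hy0
    have hlog1y : Real.log (1 + y) ≤ (1 + y) - 1 := Real.log_le_sub_one_of_pos (by linarith)
    have hdiv : (1 : ℝ) + 1 / y = (1 + y) / y := by field_simp; ring
    have hlog : Real.log (1 + y) ≤ y * Real.log (1 + 1 / y) := by
      rw [hdiv, Real.log_div (by linarith) (ne_of_gt hy0)]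
      nlinarith [hlogy, hlog1y]
    calc 1 + y = Real.exp (Real.log (1 + y)) := (Real.exp_log (by linarith)).symm
      _ ≤ Real.exp (y * Real.log (1 + 1 / y)) := Real.exp_le_exp.2 hlog
      _ = (1 + 1 / y) ^ (y : ℝ) := by
          rw [Real.rpow_def_of_pos (by positivity : (0:ℝ) < 1 + 1 / y), mul_comm]
  -- concavity chord inequality
  have hconc := (Real.concaveOn_rpow hy0.le hy1.le).2
    (Set.mem_Ici.2 (by norm_num : (0:ℝ) ≤ 1))
    (Set.mem_Ici.2 (by positivity : (0:ℝ) ≤ 1 + 1 / y))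
    (by linarith : (0:ℝ) ≤ 1 - l) hl0 (by ring)
  simp only [smul_eq_mul] at hconc
  have hpt : (1 - l) * 1 + l * (1 + 1 / y) = 1 + 1 / c := by
    field_simp [hl]
    linear_combination (by rw [hl]; field_simp : l * c = y)
  rw [hpt, Real.one_rpow] at hconc
  have h2 : 1 + y ^ 2 / c ≤ (1 + 1 / c) ^ (y : ℝ) := by
    have : 1 + y ^ 2 / c = (1 - l) * 1 + l * (1 + y) := by field_simp [hl]; linear_combination (-y) * (by rw [hl]; field_simp : l * c = y)
    rw [this]
    calc (1 - l) * 1 + l * (1 + y) ≤ (1 - l) * 1 + l * ((1 + 1 / y) ^ (y:ℝ)) := by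
          nlinarith [hkey]
      _ ≤ (1 + 1 / c) ^ (y : ℝ) := hconc
  have hpos : 0 < 1 + y ^ 2 / c := by positivity
  calc Real.log (1 + y ^ 2 / c) ≤ Real.log ((1 + 1 / c) ^ (y : ℝ)) :=
        Real.log_le_log hpos h2
    _ = y * Real.log (1 + 1 / c) := Real.log_rpow (by positivity) y
end

section
/- Let p be a rational prime, L a finite extension of ℚ_p with ring of integers O, uniformizer π, and residue field of cardinality q, and let |·| be the absolute value on L normalized so that |p| = 1/p. Let μ× be the Haar probability measure on the compact multiplicative group O× of units of O. Then ∫_{O×} −log|1−y| dμ×(y) = −q·log|π|/(q−1)². -/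
open MeasureTheory

/-- The ring of integers (closed unit ball) of an ultrametric normed field. -/
noncomputable def ringOfIntegers (L : Type*) [NormedField L] [IsUltrametricDist L] : Subring L where
  carrier := {x | ‖x‖ ≤ 1}
  mul_mem' := fun {a b} ha hb => by
    simp only [Set.mem_setOf_eq] at *
    rw [norm_mul]
    exact mul_le_one₀ ha (norm_nonneg b) hb
  one_mem' := by simp
  add_mem' := fun {a b} ha hb => by
    simp only [Set.mem_setOf_eq] at *
    exact (IsUltrametricDist.norm_add_le_max a b).trans (max_le ha hb)
  zero_mem' := by simp
  neg_mem' := fun {a} ha => by simpa using ha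

/-- The maximal ideal (open unit ball) of the ring of integers. -/
noncomputable def maxIdeal (L : Type*) [NormedField L] [IsUltrametricDist L] :
    Ideal (ringOfIntegers L) where
  carrier := {x | ‖(x : L)‖ < 1}
  add_mem' := fun {a b} ha hb => by
    simp only [Set.mem_setOf_eq] at *
    exact lt_of_le_of_lt (IsUltrametricDist.norm_add_le_max (a : L) b) (max_lt ha hb)
  zero_mem' := by simp
  smul_mem' := fun c x hx => by
    simp only [Set.mem_setOf_eq, smul_eq_mul] at *
    rw [Subring.coe_mul, norm_mul]
    exact lt_of_le_of_lt (mul_le_of_le_one_left (norm_nonneg _) c.2) hx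

/-- The residue field cardinality. -/
noncomputable def residueCard (L : Type*) [NormedField L] [IsUltrametricDist L] : ℕ :=
  Nat.card ((ringOfIntegers L) ⧸ maxIdeal L)
namespace St14

variable {L : Type*} [NormedField L] [IsUltrametricDist L]

lemma mem_O_iff {x : L} : x ∈ ringOfIntegers L ↔ ‖x‖ ≤ 1 := Iff.rfl

lemma norm_sub_le_max (a b : L) : ‖a - b‖ ≤ max ‖a‖ ‖b‖ := by
  rw [sub_eq_add_neg]
  simpa using IsUltrametricDist.norm_add_le_max a (-b)

/-- isosceles: if ‖b‖ < ‖a‖ then ‖a + b‖ = ‖a‖ -/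
lemma norm_add_eq_left {a b : L} (h : ‖b‖ < ‖a‖) : ‖a + b‖ = ‖a‖ := by
  refine le_antisymm ((IsUltrametricDist.norm_add_le_max a b).trans (max_le le_rfl h.le)) ?_
  have h2 : ‖a‖ ≤ max ‖a + b‖ ‖b‖ := by
    simpa using norm_sub_le_max (a + b) b
  rcases max_cases ‖a + b‖ ‖b‖ with ⟨he, _⟩ | ⟨he, _⟩
  · rwa [he] at h2
  · rw [he] at h2; exact absurd (lt_of_le_of_lt h2 h) (lt_irrefl _)

lemma norm_unit (y : (ringOfIntegers L)ˣ) : ‖((y : ringOfIntegers L) : L)‖ = 1 := by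
  have h1 : ‖((y : ringOfIntegers L) : L)‖ ≤ 1 := (y : ringOfIntegers L).2
  have h2 : ‖(((y⁻¹ : (ringOfIntegers L)ˣ) : ringOfIntegers L) : L)‖ ≤ 1 :=
    ((y⁻¹ : (ringOfIntegers L)ˣ) : ringOfIntegers L).2
  have h3 : ((y : ringOfIntegers L) : L) * (((y⁻¹ : (ringOfIntegers L)ˣ) : ringOfIntegers L) : L)
      = 1 := by
    rw [← Subring.coe_mul, ← Units.val_mul, mul_inv_cancel, Units.val_one, OneMemClass.coe_one]
  have h4 := congrArg norm h3
  rw [norm_mul, norm_one] at h4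
  nlinarith [norm_nonneg ((y : ringOfIntegers L) : L),
    norm_nonneg (((y⁻¹ : (ringOfIntegers L)ˣ) : ringOfIntegers L) : L)]

/-- any element of the ring of integers of norm 1 is a unit -/
noncomputable def mkUnit (x : ringOfIntegers L) (hx : ‖(x : L)‖ = 1) : (ringOfIntegers L)ˣ :=
  { val := x
    inv := ⟨((x : L))⁻¹, by rw [mem_O_iff, norm_inv, hx]; norm_num⟩
    val_inv := by
      ext
      push_cast
      rw [mul_inv_cancel₀ (by intro h; rw [h] at hx; simp at hx)]
    inv_val := by
      ext
      push_cast
      rw [inv_mul_cancel₀ (by intro h; rw [h] at hx; simp at hx)] }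

@[simp] lemma mkUnit_coe (x : ringOfIntegers L) (hx : ‖(x : L)‖ = 1) :
    ((mkUnit x hx : ringOfIntegers L) : L) = (x : L) := rfl

lemma toL_inv (y : (ringOfIntegers L)ˣ) :
    (((y⁻¹ : (ringOfIntegers L)ˣ) : ringOfIntegers L) : L) = (((y : ringOfIntegers L) : L))⁻¹ := by
  have h3 : ((y : ringOfIntegers L) : L) * (((y⁻¹ : (ringOfIntegers L)ˣ) : ringOfIntegers L) : L)
      = 1 := by
    rw [← Subring.coe_mul, ← Units.val_mul, mul_inv_cancel, Units.val_one, OneMemClass.coe_one]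
  exact eq_inv_of_mul_eq_one_right h3

end St14
open scoped ENNReal NNReal

namespace St14

variable {L : Type*} [NormedField L] [IsUltrametricDist L]

section Val

variable {π : L} (hπ0 : π ≠ 0) (hπ1 : ‖π‖ < 1)
  (hunif : ∀ x : L, x ≠ 0 → ∃ n : ℤ, ‖x‖ = ‖π‖ ^ n)

include hπ0 hπ1 hunif

lemma norm_le_pi_of_lt_one {x : L} (hx : ‖x‖ < 1) : ‖x‖ ≤ ‖π‖ := by
  rcases eq_or_ne x 0 with rfl | hx0
  · simpa using norm_nonneg π
  obtain ⟨n, hn⟩ := hunif x hx0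
  have hπpos : 0 < ‖π‖ := norm_pos_iff.mpr hπ0
  have h0 : ‖π‖ ^ n < ‖π‖ ^ (0 : ℤ) := by rw [zpow_zero]; rw [hn] at hx; exact hx
  have hn0 : (0 : ℤ) < n := (zpow_lt_zpow_iff_right_of_lt_one₀ hπpos hπ1).mp h0
  have : ‖π‖ ^ n ≤ ‖π‖ ^ (1 : ℤ) :=
    (zpow_le_zpow_iff_right_of_lt_one₀ hπpos hπ1).mpr hn0
  rw [hn]
  simpa using this

lemma exists_nat_pow_norm {x : L} (hx0 : x ≠ 0) (hx1 : ‖x‖ ≤ 1) :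
    ∃ m : ℕ, ‖x‖ = ‖π‖ ^ m := by
  obtain ⟨n, hn⟩ := hunif x hx0
  have hπpos : 0 < ‖π‖ := norm_pos_iff.mpr hπ0
  have h0 : ‖π‖ ^ n ≤ ‖π‖ ^ (0 : ℤ) := by rw [zpow_zero]; rw [hn] at hx1; exact hx1
  have hn0 : (0 : ℤ) ≤ n := (zpow_le_zpow_iff_right_of_lt_one₀ hπpos hπ1).mp h0
  lift n to ℕ using hn0
  exact ⟨n, by rw [hn, zpow_natCast]⟩

end Val

section Meas

lemma measurable_into_comap {α β γ : Type*} [mα : MeasurableSpace α] [mγ : MeasurableSpace γ]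
    (f : β → γ) {h : α → β} (hm : Measurable fun a => f (h a)) :
    @Measurable α β mα (mγ.comap f) h := by
  intro s hs
  obtain ⟨t, ht, rfl⟩ := hs
  exact hm ht

variable [MeasurableSpace L] [BorelSpace L]

lemma measurable_toL :
    Measurable (fun y : (ringOfIntegers L)ˣ => ((y : ringOfIntegers L) : L)) :=
  measurable_subtype_coe.comp (Measurable.of_comap_le le_rfl)

lemma measurable_mul_left (c : (ringOfIntegers L)ˣ) :
    Measurable (fun y : (ringOfIntegers L)ˣ => c * y) := by
  apply measurable_into_comap (Units.val)
  apply measurable_into_comap (Subtype.val)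
  exact (continuous_mul_left (((c : ringOfIntegers L) : L))).measurable.comp measurable_toL

lemma measure_image_mul_left (μ : Measure (ringOfIntegers L)ˣ) [μ.IsMulLeftInvariant]
    (c : (ringOfIntegers L)ˣ) {W : Set (ringOfIntegers L)ˣ} (hW : MeasurableSet W) :
    μ ((fun w => c * w) '' W) = μ W := by
  have himg : (fun w => c * w) '' W = (fun y => c⁻¹ * y) ⁻¹' W := by
    ext y
    simp only [Set.mem_image, Set.mem_preimage]
    constructor
    · rintro ⟨w, hw, rfl⟩; simpa using hw
    · intro h; exact ⟨c⁻¹ * y, h, by simp⟩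
  rw [himg, ← Measure.map_apply (measurable_mul_left c⁻¹) hW,
    MeasureTheory.map_mul_left_eq_self μ c⁻¹]

/-- key coset-counting lemma -/
lemma measure_eq_card_mul {ι : Type*} [Fintype ι] (μ : Measure (ringOfIntegers L)ˣ)
    [μ.IsMulLeftInvariant] (u : ι → (ringOfIntegers L)ˣ)
    {V W : Set (ringOfIntegers L)ˣ} (hW : MeasurableSet W)
    (hcover : V = ⋃ i, (fun w => u i * w) '' W)
    (hdisj : Pairwise (Function.onFun Disjoint fun i => (fun w => u i * w) '' W)) :
    μ V = (Fintype.card ι : ℝ≥0∞) * μ W := by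
  have hmeas : ∀ i : ι, MeasurableSet ((fun w => u i * w) '' W) := by
    intro i
    have himg : (fun w => u i * w) '' W = (fun y => (u i)⁻¹ * y) ⁻¹' W := by
      ext y
      simp only [Set.mem_image, Set.mem_preimage]
      constructor
      · rintro ⟨w, hw, rfl⟩; simpa using hw
      · intro h; exact ⟨(u i)⁻¹ * y, h, by simp⟩
    rw [himg]
    exact (measurable_mul_left _) hW
  rw [hcover, measure_iUnion hdisj hmeas]
  simp_rw [measure_image_mul_left μ _ hW]
  rw [tsum_fintype]
  simp [Finset.sum_const, nsmul_eq_mul]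

end Meas

end St14
namespace St14

variable {L : Type*} [NormedField L] [IsUltrametricDist L]

lemma mem_maxIdeal_iff {x : ringOfIntegers L} : x ∈ maxIdeal L ↔ ‖(x : L)‖ < 1 := Iff.rfl

lemma residue_nontrivial : Nontrivial ((ringOfIntegers L) ⧸ maxIdeal L) := by
  refine ⟨0, 1, fun h => ?_⟩
  have h1 : (1 : ringOfIntegers L) ∈ maxIdeal L := by
    have := h.symm
    rw [← map_one (Ideal.Quotient.mk (maxIdeal L)), Ideal.Quotient.eq_zero_iff_mem] at this
    exact this
  rw [mem_maxIdeal_iff] at h1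
  simp at h1

variable (p : ℕ) [Fact p.Prime] [Algebra ℚ_[p] L] [FiniteDimensional ℚ_[p] L]

lemma residue_finite (hext : ∀ a : ℚ_[p], ‖algebraMap ℚ_[p] L a‖ = ‖a‖) :
    Finite ((ringOfIntegers L) ⧸ maxIdeal L) := by
  letI : NormedSpace ℚ_[p] L :=
    { norm_smul_le := fun a x => by rw [Algebra.smul_def, norm_mul, hext] }
  haveI : ProperSpace L := FiniteDimensional.proper ℚ_[p] L
  have hcomp : IsCompact (Metric.closedBall (0 : L) 1) := isCompact_closedBall 0 1
  set k := (ringOfIntegers L) ⧸ maxIdeal L with hk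
  have hsurj : Function.Surjective (Ideal.Quotient.mk (maxIdeal L)) :=
    Ideal.Quotient.mk_surjective
  set rep : k → ringOfIntegers L := Function.surjInv hsurj with hrep
  have hrep_eq : ∀ c : k, Ideal.Quotient.mk (maxIdeal L) (rep c) = c :=
    fun c => Function.surjInv_eq hsurj c
  have hdist : ∀ x y : ringOfIntegers L,
      Ideal.Quotient.mk (maxIdeal L) x = Ideal.Quotient.mk (maxIdeal L) y →
      ‖(x : L) - (y : L)‖ < 1 := by
    intro x y hxy
    rw [Ideal.Quotient.eq] at hxy
    rw [mem_maxIdeal_iff] at hxy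
    push_cast at hxy
    exact hxy
  have hcover : Metric.closedBall (0 : L) 1 ⊆ ⋃ c : k, Metric.ball ((rep c : L)) 1 := by
    intro x hx
    rw [Metric.mem_closedBall, dist_zero_right] at hx
    set xO : ringOfIntegers L := ⟨x, hx⟩ with hxO
    set c := Ideal.Quotient.mk (maxIdeal L) xO with hc
    refine Set.mem_iUnion.mpr ⟨c, ?_⟩
    rw [Metric.mem_ball, dist_eq_norm]
    exact hdist xO (rep c) ((hrep_eq c).symm ▸ rfl)
  obtain ⟨F, hF⟩ := hcomp.elim_finite_subcover (fun c : k => Metric.ball ((rep c : L)) 1)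
    (fun c => Metric.isOpen_ball) hcover
  have hall : ∀ c : k, c ∈ F := by
    intro c
    have hmem : (rep c : L) ∈ Metric.closedBall (0 : L) 1 := by
      rw [Metric.mem_closedBall, dist_zero_right]
      exact (rep c).2
    obtain ⟨c', hc'F, hc'⟩ := Set.mem_iUnion₂.mp (hF hmem)
    have : c = c' := by
      rw [Metric.mem_ball, dist_eq_norm] at hc'
      have : (rep c) - (rep c') ∈ maxIdeal L := by
        rw [mem_maxIdeal_iff]; push_cast; exact hc'
      have := Ideal.Quotient.eq.mpr this
      rwa [hrep_eq, hrep_eq] at this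
    rwa [this]
  have : (Set.univ : Set k).Finite := F.finite_toSet.subset (fun c _ => hall c)
  exact Set.finite_univ_iff.mp this

end St14
namespace St14

variable {L : Type*} [NormedField L] [IsUltrametricDist L]

noncomputable def toL (y : (ringOfIntegers L)ˣ) : L := ((y : ringOfIntegers L) : L)

@[simp] lemma toL_one : toL (1 : (ringOfIntegers L)ˣ) = 1 := rfl
@[simp] lemma toL_mul (a b : (ringOfIntegers L)ˣ) : toL (a * b) = toL a * toL b := rfl
@[simp] lemma norm_toL (y : (ringOfIntegers L)ˣ) : ‖toL y‖ = 1 := norm_unit y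

lemma toL_inv' (y : (ringOfIntegers L)ˣ) : toL y⁻¹ = (toL y)⁻¹ := toL_inv y

lemma toL_ne_zero (y : (ringOfIntegers L)ˣ) : toL y ≠ 0 := by
  intro h
  have := norm_toL y
  rw [h] at this
  simp at this

lemma key_norm (u y : (ringOfIntegers L)ˣ) : ‖1 - toL (u⁻¹ * y)‖ = ‖toL u - toL y‖ := by
  rw [toL_mul, toL_inv']
  have h : 1 - (toL u)⁻¹ * toL y = (toL u)⁻¹ * (toL u - toL y) := by
    rw [mul_sub, inv_mul_cancel₀ (toL_ne_zero u)]
  rw [h, norm_mul, norm_inv, norm_toL]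
  simp

lemma mem_image_mul {u y : (ringOfIntegers L)ˣ} {W : Set (ringOfIntegers L)ˣ} :
    y ∈ (fun w => u * w) '' W ↔ u⁻¹ * y ∈ W := by
  constructor
  · rintro ⟨w, hw, rfl⟩; simpa using hw
  · intro h; exact ⟨u⁻¹ * y, h, by simp⟩

variable (L) in
noncomputable def rep0 : ((ringOfIntegers L) ⧸ maxIdeal L) → ringOfIntegers L :=
  Function.surjInv Ideal.Quotient.mk_surjective

lemma rep0_eq (c : (ringOfIntegers L) ⧸ maxIdeal L) :
    Ideal.Quotient.mk (maxIdeal L) (rep0 L c) = c :=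
  Function.surjInv_eq _ c

lemma mk_eq_iff {x y : ringOfIntegers L} :
    Ideal.Quotient.mk (maxIdeal L) x = Ideal.Quotient.mk (maxIdeal L) y ↔
      ‖(x : L) - (y : L)‖ < 1 := by
  rw [Ideal.Quotient.eq, mem_maxIdeal_iff]
  have h : ((x - y : ringOfIntegers L) : L) = (x : L) - (y : L) := by push_cast; ring
  rw [h]

lemma rep0_norm_one {c : (ringOfIntegers L) ⧸ maxIdeal L} (hc : c ≠ 0) :
    ‖((rep0 L c : ringOfIntegers L) : L)‖ = 1 := by
  refine le_antisymm (rep0 L c).2 ?_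
  by_contra h
  push_neg at h
  have : rep0 L c ∈ maxIdeal L := mem_maxIdeal_iff.mpr h
  exact hc ((rep0_eq c).symm.trans (Ideal.Quotient.eq_zero_iff_mem.mpr this))

/-- the sets whose measures we compute -/
def Vset (π : L) (n : ℕ) : Set (ringOfIntegers L)ˣ := {y | ‖1 - toL y‖ ≤ ‖π‖ ^ n}

lemma mem_Vset_iff {π : L} {n : ℕ} {y : (ringOfIntegers L)ˣ} :
    y ∈ Vset π n ↔ ‖1 - toL y‖ ≤ ‖π‖ ^ n := Iff.rfl

lemma measurableSet_Vset [MeasurableSpace L] [BorelSpace L] (π : L) (n : ℕ) :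
    MeasurableSet (Vset π n) := by
  have h : Vset π n = (fun y : (ringOfIntegers L)ˣ => toL y) ⁻¹' {x : L | ‖1 - x‖ ≤ ‖π‖ ^ n} :=
    rfl
  rw [h]
  exact measurable_toL (isClosed_le (continuous_const.sub continuous_id).norm
    continuous_const).measurableSet

lemma mem_image_mul_Vset {π : L} {u y : (ringOfIntegers L)ˣ} {m : ℕ} :
    y ∈ (fun w => u * w) '' Vset π m ↔ ‖toL u - toL y‖ ≤ ‖π‖ ^ m := by
  rw [mem_image_mul, mem_Vset_iff, key_norm]

section Units

variable {π : L} (hπ1 : ‖π‖ < 1)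

lemma norm_one_add_small (hπ1 : ‖π‖ < 1) (n : ℕ) (x : ringOfIntegers L) :
    ‖1 + π ^ (n + 1) * (x : L)‖ = 1 := by
  have hsm : ‖π ^ (n + 1) * (x : L)‖ < 1 := by
    rw [norm_mul, norm_pow]
    calc ‖π‖ ^ (n + 1) * ‖(x : L)‖ ≤ ‖π‖ ^ (n + 1) * 1 := by
          exact mul_le_mul_of_nonneg_left x.2 (by positivity)
      _ = ‖π‖ ^ (n + 1) := mul_one _
      _ < 1 := pow_lt_one₀ (norm_nonneg π) hπ1 (Nat.succ_ne_zero n)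
  calc ‖1 + π ^ (n + 1) * (x : L)‖ = ‖(1 : L)‖ := norm_add_eq_left (by rwa [norm_one])
    _ = 1 := norm_one

/-- units 1 + π^(n+1) * rep(c) -/
noncomputable def uu (hπ1 : ‖π‖ < 1) (n : ℕ) (c : (ringOfIntegers L) ⧸ maxIdeal L) :
    (ringOfIntegers L)ˣ :=
  mkUnit ⟨1 + π ^ (n + 1) * ((rep0 L c : ringOfIntegers L) : L),
    le_of_eq (norm_one_add_small hπ1 n (rep0 L c))⟩ (norm_one_add_small hπ1 n (rep0 L c))

lemma toL_uu (n : ℕ) (c : (ringOfIntegers L) ⧸ maxIdeal L) :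
    toL (uu hπ1 n c) = 1 + π ^ (n + 1) * ((rep0 L c : ringOfIntegers L) : L) := rfl

/-- units rep(c) for c ≠ 0 -/
noncomputable def u0 (c : {c : (ringOfIntegers L) ⧸ maxIdeal L // c ≠ 0}) :
    (ringOfIntegers L)ˣ :=
  mkUnit (rep0 L c.1) (rep0_norm_one c.2)

lemma toL_u0 (c : {c : (ringOfIntegers L) ⧸ maxIdeal L // c ≠ 0}) :
    toL (u0 c) = ((rep0 L c.1 : ringOfIntegers L) : L) := rfl

end Units

end St14
namespace St14

variable {L : Type*} [NormedField L] [IsUltrametricDist L]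
variable {π : L} (hπ0 : π ≠ 0) (hπ1 : ‖π‖ < 1)
  (hunif : ∀ x : L, x ≠ 0 → ∃ n : ℤ, ‖x‖ = ‖π‖ ^ n)

include hπ0 hunif in
lemma cover_step (n : ℕ) :
    Vset π (n + 1) = ⋃ c, (fun w => uu hπ1 n c * w) '' Vset π (n + 2) := by
  have hπpos : 0 < ‖π‖ := norm_pos_iff.mpr hπ0
  ext y
  simp only [Set.mem_iUnion]
  constructor
  · intro hy
    rw [mem_Vset_iff] at hy
    set a := toL y with ha
    -- s := (a - 1) / π^(n+1)
    set s := (a - 1) / π ^ (n + 1) with hs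
    have hπn : π ^ (n + 1) ≠ 0 := pow_ne_zero _ hπ0
    have hs1 : ‖s‖ ≤ 1 := by
      rw [hs, norm_div, norm_pow, div_le_one (by positivity)]
      rwa [norm_sub_rev] at hy
    set c := Ideal.Quotient.mk (maxIdeal L) (⟨s, hs1⟩ : ringOfIntegers L) with hc
    refine ⟨c, ?_⟩
    rw [mem_image_mul_Vset, toL_uu]
    have hlt : ‖((rep0 L c : ringOfIntegers L) : L) - s‖ < 1 := by
      have := mk_eq_iff.mp (rep0_eq c)
      simpa using this
    have hle : ‖((rep0 L c : ringOfIntegers L) : L) - s‖ ≤ ‖π‖ :=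
      norm_le_pi_of_lt_one hπ0 hπ1 hunif hlt
    have heq : 1 + π ^ (n + 1) * ((rep0 L c : ringOfIntegers L) : L) - a
        = π ^ (n + 1) * (((rep0 L c : ringOfIntegers L) : L) - s) := by
      have : a - 1 = π ^ (n + 1) * s := by
        rw [hs, mul_div_cancel₀ _ hπn]
      rw [mul_sub, ← this]
      ring
    rw [heq, norm_mul, norm_pow, pow_succ (‖π‖) (n + 1)]
    exact mul_le_mul_of_nonneg_left hle (by positivity)
  · rintro ⟨c, hy⟩
    rw [mem_image_mul_Vset, toL_uu] at hy
    rw [mem_Vset_iff]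
    set a := toL y with ha
    have h1 : 1 - a = (1 + π ^ (n + 1) * ((rep0 L c : ringOfIntegers L) : L) - a)
        - π ^ (n + 1) * ((rep0 L c : ringOfIntegers L) : L) := by ring
    rw [h1]
    refine (norm_sub_le_max _ _).trans (max_le ?_ ?_)
    · exact hy.trans (by
        calc ‖π‖ ^ (n + 2) = ‖π‖ ^ (n + 1) * ‖π‖ := by ring
          _ ≤ ‖π‖ ^ (n + 1) * 1 := mul_le_mul_of_nonneg_left hπ1.le (by positivity)
          _ = ‖π‖ ^ (n + 1) := mul_one _)
    · rw [norm_mul, norm_pow]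
      calc ‖π‖ ^ (n + 1) * ‖((rep0 L c : ringOfIntegers L) : L)‖ ≤ ‖π‖ ^ (n + 1) * 1 :=
            mul_le_mul_of_nonneg_left (rep0 L c).2 (by positivity)
        _ = ‖π‖ ^ (n + 1) := mul_one _

include hπ0 in
lemma disj_step (n : ℕ) :
    Pairwise (Function.onFun Disjoint fun c => (fun w => uu hπ1 n c * w) '' Vset π (n + 2)) := by
  intro c c' hne
  rw [Function.onFun]
  rw [Set.disjoint_left]
  intro y hy hy'
  rw [mem_image_mul_Vset, toL_uu] at hy hy'
  apply hne
  have hdiff : ‖π ^ (n + 1) * (((rep0 L c : ringOfIntegers L) : L)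
      - ((rep0 L c' : ringOfIntegers L) : L))‖ ≤ ‖π‖ ^ (n + 2) := by
    have h1 : π ^ (n + 1) * (((rep0 L c : ringOfIntegers L) : L)
        - ((rep0 L c' : ringOfIntegers L) : L))
        = (1 + π ^ (n + 1) * ((rep0 L c : ringOfIntegers L) : L) - toL y)
          - (1 + π ^ (n + 1) * ((rep0 L c' : ringOfIntegers L) : L) - toL y) := by ring
    rw [h1]
    exact (norm_sub_le_max _ _).trans (max_le hy hy')
  have hπpos : 0 < ‖π‖ := norm_pos_iff.mpr hπ0
  rw [norm_mul, norm_pow] at hdiff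
  have hlt : ‖((rep0 L c : ringOfIntegers L) : L) - ((rep0 L c' : ringOfIntegers L) : L)‖ < 1 := by
    have h2 : ‖π‖ ^ (n + 2) = ‖π‖ ^ (n + 1) * ‖π‖ := by ring
    rw [h2] at hdiff
    have h3 := le_of_mul_le_mul_left hdiff (by positivity : (0:ℝ) < ‖π‖ ^ (n+1))
    exact lt_of_le_of_lt h3 hπ1
  have := mk_eq_iff.mpr hlt
  rwa [rep0_eq, rep0_eq] at this

end St14
namespace St14

variable {L : Type*} [NormedField L] [IsUltrametricDist L]
variable {π : L} (hπ0 : π ≠ 0) (hπ1 : ‖π‖ < 1)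
  (hunif : ∀ x : L, x ≠ 0 → ∃ n : ℤ, ‖x‖ = ‖π‖ ^ n)

include hπ0 hπ1 hunif in
lemma cover_top :
    (Set.univ : Set (ringOfIntegers L)ˣ)
      = ⋃ c : {c : (ringOfIntegers L) ⧸ maxIdeal L // c ≠ 0},
          (fun w => u0 c * w) '' Vset π 1 := by
  ext y
  simp only [Set.mem_univ, true_iff, Set.mem_iUnion]
  set a := toL y with ha
  set c := Ideal.Quotient.mk (maxIdeal L) (y : ringOfIntegers L) with hc
  have hc0 : c ≠ 0 := by
    intro h
    have : (y : ringOfIntegers L) ∈ maxIdeal L := Ideal.Quotient.eq_zero_iff_mem.mp h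
    rw [mem_maxIdeal_iff] at this
    have h1 := norm_toL y
    rw [toL] at h1
    rw [h1] at this
    exact lt_irrefl _ this
  refine ⟨⟨c, hc0⟩, ?_⟩
  rw [mem_image_mul_Vset, toL_u0]
  have hlt : ‖((rep0 L c : ringOfIntegers L) : L) - a‖ < 1 := by
    have h2 : Ideal.Quotient.mk (maxIdeal L) (rep0 L c) =
        Ideal.Quotient.mk (maxIdeal L) (y : ringOfIntegers L) := by rw [rep0_eq c]
    exact mk_eq_iff.mp h2
  have := norm_le_pi_of_lt_one hπ0 hπ1 hunif hlt
  simpa using this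

include hπ0 hπ1 in
lemma disj_top :
    Pairwise (Function.onFun Disjoint fun c : {c : (ringOfIntegers L) ⧸ maxIdeal L // c ≠ 0} =>
      (fun w => u0 c * w) '' Vset π 1) := by
  intro c c' hne
  rw [Function.onFun, Set.disjoint_left]
  intro y hy hy'
  rw [mem_image_mul_Vset, toL_u0] at hy hy'
  apply hne
  have hdiff : ‖((rep0 L c.1 : ringOfIntegers L) : L) - ((rep0 L c'.1 : ringOfIntegers L) : L)‖
      < 1 := by
    have h1 : ((rep0 L c.1 : ringOfIntegers L) : L) - ((rep0 L c'.1 : ringOfIntegers L) : L)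
        = (((rep0 L c.1 : ringOfIntegers L) : L) - toL y)
          - (((rep0 L c'.1 : ringOfIntegers L) : L) - toL y) := by ring
    rw [h1]
    refine lt_of_le_of_lt ((norm_sub_le_max _ _).trans (max_le hy hy')) ?_
    simpa using hπ1
  have h2 := mk_eq_iff.mpr hdiff
  rw [rep0_eq, rep0_eq] at h2
  exact Subtype.ext h2

end St14
namespace St14

lemma ennreal_solve {m : ℕ} (hm : 0 < m) {x y : ℝ≥0∞} (h : y = (m : ℝ≥0∞) * x) :
    x = (m : ℝ≥0∞)⁻¹ * y := by
  have hm0 : (m : ℝ≥0∞) ≠ 0 := by exact_mod_cast hm.ne'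
  have hmt : (m : ℝ≥0∞) ≠ ⊤ := ENNReal.natCast_ne_top m
  rw [h, ← mul_assoc, ENNReal.inv_mul_cancel hm0 hmt, one_mul]

variable {L : Type*} [NormedField L] [IsUltrametricDist L]
variable {π : L} (hπ0 : π ≠ 0) (hπ1 : ‖π‖ < 1)
  (hunif : ∀ x : L, x ≠ 0 → ∃ n : ℤ, ‖x‖ = ‖π‖ ^ n)
variable [MeasurableSpace L] [BorelSpace L]

include hπ0 hπ1 hunif in
lemma measure_Vset (hfin : Finite ((ringOfIntegers L) ⧸ maxIdeal L))
    (μ : Measure (ringOfIntegers L)ˣ) [IsProbabilityMeasure μ] [μ.IsMulLeftInvariant] (n : ℕ) :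
    μ (Vset π (n + 1)) = ((Nat.card ((ringOfIntegers L) ⧸ maxIdeal L) - 1 : ℕ) : ℝ≥0∞)⁻¹ *
      (((Nat.card ((ringOfIntegers L) ⧸ maxIdeal L) : ℕ) : ℝ≥0∞))⁻¹ ^ n := by
  classical
  set k := (ringOfIntegers L) ⧸ maxIdeal L with hk
  haveI : Finite k := hfin
  haveI : Fintype k := Fintype.ofFinite k
  haveI : Nontrivial k := residue_nontrivial
  have hq2 : 2 ≤ Fintype.card k := Fintype.one_lt_card_iff_nontrivial.mpr ‹Nontrivial k›
  have hcard : Nat.card k = Fintype.card k := Nat.card_eq_fintype_card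
  have hκ : Fintype.card {c : k // c ≠ 0} = Fintype.card k - 1 := by
    rw [Fintype.card_subtype_compl, Fintype.card_subtype_eq]
  -- base case
  have hbase : μ (Vset π 1) = ((Nat.card k - 1 : ℕ) : ℝ≥0∞)⁻¹ := by
    have h1 : μ (Set.univ : Set (ringOfIntegers L)ˣ)
        = (Fintype.card {c : k // c ≠ 0} : ℝ≥0∞) * μ (Vset π 1) :=
      measure_eq_card_mul μ u0 (measurableSet_Vset π 1) (cover_top hπ0 hπ1 hunif)
        (disj_top hπ0 hπ1)
    rw [measure_univ] at h1
    have h2 := ennreal_solve (m := Fintype.card {c : k // c ≠ 0}) (by omega) h1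
    rw [mul_one] at h2
    rw [h2, hκ, hcard]
  -- inductive step
  have hstep : ∀ m : ℕ, μ (Vset π (m + 2)) = ((Nat.card k : ℕ) : ℝ≥0∞)⁻¹ * μ (Vset π (m + 1)) := by
    intro m
    have h1 : μ (Vset π (m + 1)) = (Fintype.card k : ℝ≥0∞) * μ (Vset π (m + 2)) :=
      measure_eq_card_mul μ (uu hπ1 m) (measurableSet_Vset π (m + 2))
        (cover_step hπ0 hπ1 hunif m) (disj_step hπ0 hπ1 m)
    have h2 := ennreal_solve (m := Fintype.card k) (by omega) h1
    rw [h2, hcard]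
  induction n with
  | zero => simpa using hbase
  | succ m ih =>
    rw [hstep m, ih]
    ring

end St14
namespace St14

variable {L : Type*} [NormedField L] [IsUltrametricDist L]
variable {π : L} (hπ0 : π ≠ 0) (hπ1 : ‖π‖ < 1)
  (hunif : ∀ x : L, x ≠ 0 → ∃ n : ℤ, ‖x‖ = ‖π‖ ^ n)

lemma norm_one_sub_le_one (y : (ringOfIntegers L)ˣ) : ‖1 - toL y‖ ≤ 1 := by
  refine (norm_sub_le_max _ _).trans (max_le (by simp) (by simp))

lemma toL_eq_one {y : (ringOfIntegers L)ˣ} (h : toL y = 1) : y = 1 := by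
  have h2 : (y : ringOfIntegers L) = 1 := Subtype.ext h
  exact Units.ext h2

include hπ0 hπ1 hunif in
lemma pointwise_eq {y : (ringOfIntegers L)ˣ} (hy : y ≠ 1) :
    ENNReal.ofReal (-Real.log ‖1 - toL y‖)
      = ∑' n : ℕ, (Vset π (n + 1)).indicator
          (fun _ => ENNReal.ofReal (-Real.log ‖π‖)) y := by
  have hπpos : 0 < ‖π‖ := norm_pos_iff.mpr hπ0
  set c0 := ENNReal.ofReal (-Real.log ‖π‖) with hc0
  have hne : 1 - toL y ≠ 0 := by
    intro h
    exact hy (toL_eq_one (sub_eq_zero.mp h).symm)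
  obtain ⟨m, hm⟩ := exists_nat_pow_norm hπ0 hπ1 hunif hne (norm_one_sub_le_one y)
  -- left side
  have hL : ENNReal.ofReal (-Real.log ‖1 - toL y‖) = (m : ℝ≥0∞) * c0 := by
    rw [hm, Real.log_pow]
    have h1 : -((m : ℝ) * Real.log ‖π‖) = (m : ℝ) * (-Real.log ‖π‖) := by ring
    rw [h1, ENNReal.ofReal_mul (by positivity), ENNReal.ofReal_natCast]
  rw [hL]
  -- right side
  have hind : ∀ n : ℕ, (Vset π (n + 1)).indicator (fun _ => c0) y
      = if n + 1 ≤ m then c0 else 0 := by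
    intro n
    have hmem : y ∈ Vset π (n + 1) ↔ n + 1 ≤ m := by
      rw [mem_Vset_iff, hm]
      exact (pow_right_strictAnti₀ hπpos hπ1).le_iff_ge
    classical
    rw [Set.indicator_apply]
    by_cases h : n + 1 ≤ m
    · rw [if_pos (hmem.mpr h), if_pos h]
    · rw [if_neg (fun hc => h (hmem.mp hc)), if_neg h]
  rw [tsum_congr hind]
  classical
  rw [tsum_eq_sum (s := Finset.range m) (fun b hb => by
    rw [if_neg]
    simp only [Finset.mem_range] at hb
    omega)]
  have hsum : ∀ b ∈ Finset.range m, (if b + 1 ≤ m then c0 else 0) = c0 := by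
    intro b hb
    simp only [Finset.mem_range] at hb
    rw [if_pos (by omega)]
  rw [Finset.sum_congr rfl hsum, Finset.sum_const, Finset.card_range, nsmul_eq_mul]

end St14
namespace St14

variable {L : Type*} [NormedField L] [IsUltrametricDist L]
variable {π : L} (hπ0 : π ≠ 0) (hπ1 : ‖π‖ < 1)
  (hunif : ∀ x : L, x ≠ 0 → ∃ n : ℤ, ‖x‖ = ‖π‖ ^ n)
variable [MeasurableSpace L] [BorelSpace L]

include hπ0 hπ1 hunif in
lemma measure_one_eq_zero (hfin : Finite ((ringOfIntegers L) ⧸ maxIdeal L))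
    (μ : Measure (ringOfIntegers L)ˣ) [IsProbabilityMeasure μ] [μ.IsMulLeftInvariant] :
    μ {(1 : (ringOfIntegers L)ˣ)} = 0 := by
  set q : ℕ := Nat.card ((ringOfIntegers L) ⧸ maxIdeal L) with hqdef
  haveI : Finite ((ringOfIntegers L) ⧸ maxIdeal L) := hfin
  haveI : Nontrivial ((ringOfIntegers L) ⧸ maxIdeal L) := residue_nontrivial
  haveI : Fintype ((ringOfIntegers L) ⧸ maxIdeal L) := Fintype.ofFinite _
  have hq2 : 2 ≤ q := by
    rw [hqdef, Nat.card_eq_fintype_card]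
    have := Fintype.one_lt_card_iff_nontrivial.mpr
      ‹Nontrivial ((ringOfIntegers L) ⧸ maxIdeal L)›
    omega
  have hsub : ∀ n : ℕ, ({(1 : (ringOfIntegers L)ˣ)} : Set (ringOfIntegers L)ˣ)
      ⊆ Vset π (n + 1) := by
    intro n y hy
    rw [Set.mem_singleton_iff] at hy
    rw [hy, mem_Vset_iff, toL_one, sub_self, norm_zero]
    positivity
  have hle : ∀ n : ℕ, μ {(1 : (ringOfIntegers L)ˣ)}
      ≤ ((q - 1 : ℕ) : ℝ≥0∞)⁻¹ * (((q : ℕ) : ℝ≥0∞))⁻¹ ^ n := by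
    intro n
    exact (measure_mono (hsub n)).trans_eq (measure_Vset hπ0 hπ1 hunif hfin μ n)
  have htend : Filter.Tendsto (fun n : ℕ => ((q - 1 : ℕ) : ℝ≥0∞)⁻¹ * (((q : ℕ) : ℝ≥0∞))⁻¹ ^ n)
      Filter.atTop (nhds 0) := by
    have h1 : (((q : ℕ) : ℝ≥0∞))⁻¹ < 1 := by
      rw [ENNReal.inv_lt_one]
      exact_mod_cast by omega
    have h2 := ENNReal.tendsto_pow_atTop_nhds_zero_of_lt_one h1
    have h3 := ENNReal.Tendsto.const_mul h2
      (Or.inr (by simp [ENNReal.inv_ne_top] ; exact_mod_cast by omega : ((q - 1 : ℕ) : ℝ≥0∞)⁻¹ ≠ ⊤))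
    simpa using h3
  have := ge_of_tendsto' htend (fun n => hle n)
  exact le_antisymm (by simpa using this) zero_le

end St14
namespace St14

variable {L : Type*} [NormedField L] [IsUltrametricDist L]
variable {π : L} (hπ0 : π ≠ 0) (hπ1 : ‖π‖ < 1)
  (hunif : ∀ x : L, x ≠ 0 → ∃ n : ℤ, ‖x‖ = ‖π‖ ^ n)
variable [MeasurableSpace L] [BorelSpace L]

include hπ0 hπ1 hunif in
lemma lintegral_eq (hfin : Finite ((ringOfIntegers L) ⧸ maxIdeal L))
    (μ : Measure (ringOfIntegers L)ˣ) [IsProbabilityMeasure μ] [μ.IsMulLeftInvariant] :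
    ∫⁻ y, ENNReal.ofReal (-Real.log ‖1 - toL y‖) ∂μ
      = ENNReal.ofReal (-Real.log ‖π‖) *
        (((Nat.card ((ringOfIntegers L) ⧸ maxIdeal L) - 1 : ℕ) : ℝ≥0∞)⁻¹ *
          (1 - ((Nat.card ((ringOfIntegers L) ⧸ maxIdeal L) : ℕ) : ℝ≥0∞)⁻¹)⁻¹) := by
  set q : ℕ := Nat.card ((ringOfIntegers L) ⧸ maxIdeal L) with hqdef
  set c0 := ENNReal.ofReal (-Real.log ‖π‖) with hc0
  have hae : (fun y => ENNReal.ofReal (-Real.log ‖1 - toL y‖))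
      =ᵐ[μ] (fun y => ∑' n : ℕ, (Vset π (n + 1)).indicator (fun _ => c0) y) := by
    rw [Filter.EventuallyEq, ae_iff]
    refine measure_mono_null ?_ (measure_one_eq_zero hπ0 hπ1 hunif hfin μ)
    intro y hy
    rw [Set.mem_setOf_eq] at hy
    rw [Set.mem_singleton_iff]
    by_contra hne
    exact hy (pointwise_eq hπ0 hπ1 hunif hne)
  rw [lintegral_congr_ae hae,
    lintegral_tsum (fun n => (measurable_const.indicator (measurableSet_Vset π (n + 1))).aemeasurable)]
  have h1 : ∀ n : ℕ, ∫⁻ y, (Vset π (n + 1)).indicator (fun _ => c0) y ∂μ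
      = c0 * (((q - 1 : ℕ) : ℝ≥0∞)⁻¹ * (((q : ℕ) : ℝ≥0∞))⁻¹ ^ n) := by
    intro n
    rw [lintegral_indicator_const (measurableSet_Vset π (n + 1)) c0,
      measure_Vset hπ0 hπ1 hunif hfin μ n]
  rw [tsum_congr h1]
  simp_rw [← mul_assoc]
  rw [ENNReal.tsum_mul_left, ENNReal.tsum_geometric, mul_assoc]

end St14
theorem statement14 (p : ℕ) [Fact p.Prime] (L : Type*) [NormedField L] [IsUltrametricDist L]
    [Algebra ℚ_[p] L] [FiniteDimensional ℚ_[p] L]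
    (hext : ∀ a : ℚ_[p], ‖algebraMap ℚ_[p] L a‖ = ‖a‖)
    [MeasurableSpace L] [BorelSpace L]
    (π : L) (hπ0 : π ≠ 0) (hπ1 : ‖π‖ < 1)
    (hunif : ∀ x : L, x ≠ 0 → ∃ n : ℤ, ‖x‖ = ‖π‖ ^ n)
    (q : ℕ) (hq : q = residueCard L)
    (μ : Measure (ringOfIntegers L)ˣ) [IsProbabilityMeasure μ] [μ.IsMulLeftInvariant] :
    (∫ y : (ringOfIntegers L)ˣ, -Real.log ‖1 - ((y : ringOfIntegers L) : L)‖ ∂μ) =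
      -(q : ℝ) * Real.log ‖π‖ / ((q : ℝ) - 1) ^ 2 := by
  classical
  have hfin : Finite ((ringOfIntegers L) ⧸ maxIdeal L) := St14.residue_finite p hext
  haveI : Nontrivial ((ringOfIntegers L) ⧸ maxIdeal L) := St14.residue_nontrivial
  haveI : Fintype ((ringOfIntegers L) ⧸ maxIdeal L) := Fintype.ofFinite _
  have hq' : q = Nat.card ((ringOfIntegers L) ⧸ maxIdeal L) := hq
  have hq2 : 2 ≤ q := by
    rw [hq', Nat.card_eq_fintype_card]
    have := Fintype.one_lt_card_iff_nontrivial.mpr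
      ‹Nontrivial ((ringOfIntegers L) ⧸ maxIdeal L)›
    omega
  have hπpos : 0 < ‖π‖ := norm_pos_iff.mpr hπ0
  have hlogpos : 0 ≤ -Real.log ‖π‖ := neg_nonneg.mpr (Real.log_nonpos (norm_nonneg π) hπ1.le)
  -- the integrand
  have hmeasL : Measurable fun x : L => Real.log ‖1 - x‖ :=
    Real.measurable_log.comp (continuous_const.sub continuous_id).norm.measurable
  have hmeas : Measurable fun y : (ringOfIntegers L)ˣ => -Real.log ‖1 - St14.toL y‖ :=
    (hmeasL.comp St14.measurable_toL).neg
  have h0 : 0 ≤ᵐ[μ] fun y : (ringOfIntegers L)ˣ => -Real.log ‖1 - St14.toL y‖ :=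
    Filter.Eventually.of_forall fun y =>
      neg_nonneg.mpr (Real.log_nonpos (norm_nonneg _) (St14.norm_one_sub_le_one y))
  have hint := integral_eq_lintegral_of_nonneg_ae h0 hmeas.aestronglyMeasurable
  have hgoal : (∫ y : (ringOfIntegers L)ˣ, -Real.log ‖1 - ((y : ringOfIntegers L) : L)‖ ∂μ)
      = (∫ y : (ringOfIntegers L)ˣ, -Real.log ‖1 - St14.toL y‖ ∂μ) := rfl
  rw [hgoal, hint, St14.lintegral_eq hπ0 hπ1 hunif hfin μ]
  rw [← hq']
  -- compute the toReal
  have hQ1 : (((q - 1 : ℕ) : ℝ≥0∞)⁻¹).toReal = ((q : ℝ) - 1)⁻¹ := by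
    rw [ENNReal.toReal_inv, ENNReal.toReal_natCast, Nat.cast_sub (by omega), Nat.cast_one]
  have hQle : ((q : ℕ) : ℝ≥0∞)⁻¹ ≤ 1 := ENNReal.inv_le_one.mpr (by exact_mod_cast by omega)
  have hQ2 : ((1 - ((q : ℕ) : ℝ≥0∞)⁻¹)⁻¹).toReal = (1 - (q : ℝ)⁻¹)⁻¹ := by
    rw [ENNReal.toReal_inv, ENNReal.toReal_sub_of_le hQle ENNReal.one_ne_top,
      ENNReal.toReal_one, ENNReal.toReal_inv, ENNReal.toReal_natCast]
  rw [ENNReal.toReal_mul, ENNReal.toReal_mul, ENNReal.toReal_ofReal hlogpos, hQ1, hQ2]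
  -- final real arithmetic
  have hqR : (2 : ℝ) ≤ (q : ℝ) := by exact_mod_cast hq2
  have h1 : (q : ℝ) ≠ 0 := by linarith
  have h2 : (q : ℝ) - 1 ≠ 0 := by linarith
  have h3 : 1 - (q : ℝ)⁻¹ ≠ 0 := by
    rw [sub_ne_zero]
    intro h
    have : (q : ℝ)⁻¹ ≤ 1 / 2 := by
      rw [inv_eq_one_div]
      apply div_le_div_of_nonneg_left <;> linarith
    rw [← h] at this
    linarith
  field_simp
end
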